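/- arXiv:1603.03003 — 6 statements merged into one kernel-verified Lean document; each statement's English description precedes it below -/
import Mathlib

section
/- Let X be a path-connected, locally path-connected, semilocally simply connected topological space with base point x, and let X_x → X be its universal cover. Then the group of deck transformations Aut(X_x / X) is isomorphic to π₁(X, x). -/
/-- `X` is semilocally simply connected. -/
def SemilocallySimplyConnected (X : Type*) [TopologicalSpace X] : Prop :=
  ∀ x : X, ∃ U ∈ nhds x, ∀ γ : Path x x, (∀ t, γ t ∈ U) → Path.Homotopic γ (Path.refl x)

/-- The group of deck transformations of a covering `π : Y → X`: homeomorphisms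
`f : Y → Y` with `π ∘ f = π`, as a subgroup of the permutation group of `Y`. -/
def deckGroup {Y X : Type*} [TopologicalSpace Y] [TopologicalSpace X] (π : Y → X) :
    Subgroup (Equiv.Perm Y) where
  carrier := {f | Continuous f ∧ Continuous f.symm ∧ π ∘ f = π}
  one_mem' := ⟨continuous_id, continuous_id, rfl⟩
  mul_mem' := by
    rintro f g ⟨hf, hf', hfp⟩ ⟨hg, hg', hgp⟩
    exact ⟨hf.comp hg, hg'.comp hf', by
      show π ∘ (f ∘ g) = π
      rw [← Function.comp_assoc, hfp, hgp]⟩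
  inv_mem' := by
    rintro f ⟨hf, hf', hfp⟩
    refine ⟨hf', hf, ?_⟩
    funext y
    have : π (f⁻¹ y) = (π ∘ f) (f⁻¹ y) := congrFun hfp.symm _
    simpa using this


open Set unitInterval Topology

section Lifting

variable {E X : Type*} [TopologicalSpace E] [TopologicalSpace X] {f : E → X}

/-- Gluing lemma: continuity on a union of two closed sets. -/
theorem contOn_union_closed {α β : Type*} [TopologicalSpace α] [TopologicalSpace β]
    {g : α → β} {s t : Set α} (hs : IsClosed s) (ht : IsClosed t)
    (hgs : ContinuousOn g s) (hgt : ContinuousOn g t) : ContinuousOn g (s ∪ t) := by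
  intro x hx
  rw [ContinuousWithinAt, nhdsWithin_union, Filter.tendsto_sup]
  constructor
  · by_cases hxs : x ∈ s
    · exact hgs x hxs
    · have : x ∉ closure s := fun h => hxs (hs.closure_eq ▸ h)
      exact continuousWithinAt_of_notMem_closure this
  · by_cases hxt : x ∈ t
    · exact hgt x hxt
    · have : x ∉ closure t := fun h => hxt (ht.closure_eq ▸ h)
      exact continuousWithinAt_of_notMem_closure this

namespace IsCoveringMap

variable (hf : IsCoveringMap f)
include hf

theorem nonempty_fiber_of {x : X} (e : E) (he : f e ∈ (hf x).2.choose) : Nonempty (f ⁻¹' {x}) := by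
  obtain ⟨H, -⟩ := (hf x).2.choose_spec.2.2.2
  exact ⟨(H ⟨e, he⟩).2⟩

/-- Existence of path lifts for a covering map. -/
theorem exists_path_lift (γ : C(I, X)) (e : E) (he : f e = γ 0) :
    ∃ Γ : C(I, E), (∀ u, f (Γ u) = γ u) ∧ Γ 0 = e := by
  classical
  set γ' : ℝ → X := fun s => γ (projIcc 0 1 zero_le_one s) with hγ'
  have hγc : Continuous γ' := γ.continuous.comp continuous_projIcc
  have hγ'0 : γ' 0 = γ 0 := by simp [hγ']
  set S : Set ℝ := {s | s ∈ Icc (0:ℝ) 1 ∧ ∃ g : ℝ → E, ContinuousOn g (Icc 0 s) ∧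
    (∀ u ∈ Icc (0:ℝ) s, f (g u) = γ' u) ∧ g 0 = e} with hS
  have h0S : (0:ℝ) ∈ S := by
    refine ⟨⟨le_refl _, zero_le_one⟩, fun _ => e, continuousOn_const, ?_, rfl⟩
    intro u hu
    have : u = 0 := le_antisymm hu.2 hu.1
    rw [this, hγ'0, he]
  -- extension lemma
  have extend : ∀ s ∈ S, ∀ s'' ∈ Icc (0:ℝ) 1, s ≤ s'' →
      ∀ x : X, (∀ u ∈ Icc s s'', γ' u ∈ (hf x).2.choose) → s'' ∈ S := by
    rintro s ⟨hs01, g, gcont, glift, g0⟩ s'' hs''01 hss'' x hbase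
    haveI := hf.nonempty_fiber_of (g s)
      (by rw [glift s ⟨hs01.1, le_refl _⟩]; exact hbase s ⟨le_refl _, hss''⟩)
    set t := (hf x).toTrivialization with ht
    have hgs : f (g s) = γ' s := glift s ⟨hs01.1, le_refl _⟩
    have hgs_base : f (g s) ∈ t.baseSet := hgs ▸ hbase s ⟨le_refl _, hss''⟩
    have hgs_src : g s ∈ t.source := t.mem_source.2 hgs_base
    set i := (t (g s)).2 with hi
    set sec : X → E := fun y => t.toPartialHomeomorph.symm (y, i) with hsec
    have seccont : ContinuousOn sec t.baseSet := by
      apply t.toPartialHomeomorph.continuousOn_symm.comp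
        (Continuous.continuousOn (by continuity))
      intro y hy
      rw [t.target_eq]
      exact ⟨hy, trivial⟩
    have secproj : ∀ y ∈ t.baseSet, f (sec y) = y := fun y hy => t.proj_symm_apply' hy
    have secgs : sec (γ' s) = g s := by
      rw [hsec]; dsimp only
      rw [← hgs, hi]
      exact t.symm_apply_mk_proj hgs_src
    set g' : ℝ → E := fun u => if u ≤ s then g u else sec (γ' u) with hg'
    refine ⟨hs''01, g', ?_, ?_, ?_⟩
    · have hdom : Icc (0:ℝ) s'' = Icc 0 s ∪ Icc s s'' :=
        (Icc_union_Icc_eq_Icc hs01.1 hss'').symm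
      rw [hdom]
      apply contOn_union_closed isClosed_Icc isClosed_Icc
      · exact gcont.congr fun u hu => if_pos hu.2
      · have : ContinuousOn (fun u => sec (γ' u)) (Icc s s'') :=
          seccont.comp hγc.continuousOn fun u hu => hbase u hu
        apply this.congr
        intro u hu
        by_cases h : u ≤ s
        · have hus : u = s := le_antisymm h hu.1
          rw [hg']; dsimp only; rw [if_pos h, hus, secgs]
        · rw [hg']; dsimp only; rw [if_neg h]
    · intro u hu
      by_cases h : u ≤ s
      · rw [hg']; dsimp only; rw [if_pos h]
        exact glift u ⟨hu.1, h⟩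
      · rw [hg']; dsimp only; rw [if_neg h]
        exact secproj _ (hbase u ⟨(not_le.1 h).le, hu.2⟩)
    · rw [hg']; dsimp only; rw [if_pos hs01.1]; exact g0
  have hSne : S.Nonempty := ⟨0, h0S⟩
  have hSbdd : BddAbove S := ⟨1, fun s hs => hs.1.2⟩
  set c := sSup S with hc
  have hc0 : 0 ≤ c := le_csSup hSbdd h0S
  have hc1 : c ≤ 1 := csSup_le hSne fun s hs => hs.1.2
  -- c ∈ S
  have hcS : c ∈ S := by
    have hbase : γ' c ∈ (hf (γ' c)).2.choose := (hf (γ' c)).2.choose_spec.1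
    have hW : IsOpen (γ' ⁻¹' (hf (γ' c)).2.choose) := (hf (γ' c)).2.choose_spec.2.1.preimage hγc
    obtain ⟨ε, hε, hball⟩ := Metric.isOpen_iff.1 hW c hbase
    obtain ⟨s', hs'S, hs'⟩ := exists_lt_of_lt_csSup hSne (by linarith : c - ε < c)
    have hs'c : s' ≤ c := le_csSup hSbdd hs'S
    refine extend s' hs'S c ⟨hc0, hc1⟩ hs'c (γ' c) fun u hu => hball ?_
    rw [Metric.mem_ball, Real.dist_eq, abs_sub_lt_iff]
    constructor <;> linarith [hu.1, hu.2]
  -- c = 1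
  have hc_eq : c = 1 := by
    by_contra hne
    have hclt : c < 1 := lt_of_le_of_ne hc1 hne
    have hbase : γ' c ∈ (hf (γ' c)).2.choose := (hf (γ' c)).2.choose_spec.1
    have hW : IsOpen (γ' ⁻¹' (hf (γ' c)).2.choose) := (hf (γ' c)).2.choose_spec.2.1.preimage hγc
    obtain ⟨ε, hε, hball⟩ := Metric.isOpen_iff.1 hW c hbase
    set s'' := min (c + ε/2) 1 with hs''
    have hcs'' : c < s'' := lt_min (by linarith) hclt
    have hs''S : s'' ∈ S := by
      refine extend c hcS s'' ⟨hc0.trans hcs''.le, min_le_right _ _⟩ hcs''.le (γ' c)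
        fun u hu => hball ?_
      rw [Metric.mem_ball, Real.dist_eq, abs_sub_lt_iff]
      have : u ≤ c + ε/2 := hu.2.trans (min_le_left _ _)
      constructor <;> [linarith; linarith [hu.1]]
    exact absurd (le_csSup hSbdd hs''S) (not_le.2 hcs'')
  obtain ⟨-, g, gcont, glift, g0⟩ := hc_eq ▸ hcS
  refine ⟨⟨fun u => g u, ?_⟩, ?_, ?_⟩
  · exact gcont.restrict
  · intro u
    show f (g ↑u) = γ u
    rw [glift u ⟨u.2.1, u.2.2⟩, hγ']
    show γ (projIcc 0 1 zero_le_one ↑u) = γ u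
    congr 1
    exact projIcc_val zero_le_one u
  · show g ((0:I) : ℝ) = e
    exact g0

/-- Uniqueness of lifts agreeing at a point of a preconnected space. -/
theorem lift_unique {A : Type*} [TopologicalSpace A] [PreconnectedSpace A]
    {g₁ g₂ : A → E} (h₁ : Continuous g₁) (h₂ : Continuous g₂)
    (h : ∀ a, f (g₁ a) = f (g₂ a)) (a₀ : A) (ha : g₁ a₀ = g₂ a₀) : g₁ = g₂ :=
  hf.eq_of_comp_eq h₁ h₂ (funext h) a₀ ha

/-- The canonical path lift. -/
noncomputable def covLift (γ : C(I, X)) (e : E) (he : f e = γ 0) : C(I, E) :=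
  (hf.exists_path_lift γ e he).choose

theorem covLift_proj (γ : C(I, X)) (e : E) (he : f e = γ 0) (u : I) :
    f (hf.covLift γ e he u) = γ u :=
  (hf.exists_path_lift γ e he).choose_spec.1 u

theorem covLift_zero (γ : C(I, X)) (e : E) (he : f e = γ 0) :
    hf.covLift γ e he 0 = e :=
  (hf.exists_path_lift γ e he).choose_spec.2

theorem covLift_eq (γ : C(I, X)) (e : E) (he : f e = γ 0) {Γ : C(I, E)}
    (hΓ : ∀ u, f (Γ u) = γ u) (hΓ0 : Γ 0 = e) (u : I) : Γ u = hf.covLift γ e he u := by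
  have := hf.lift_unique (g₁ := fun u => Γ u) (g₂ := fun u => hf.covLift γ e he u)
    Γ.continuous (hf.covLift γ e he).continuous
    (fun a => by rw [hΓ a, hf.covLift_proj γ e he a])
    0 (by show Γ 0 = hf.covLift γ e he 0; rw [hΓ0, hf.covLift_zero])
  exact congrFun this u

end IsCoveringMap

end Lifting

open Set unitInterval Topology

section Mono
variable {E X : Type*} [TopologicalSpace E] [TopologicalSpace X] {f : E → X}

theorem contOn_union_closed' {α β : Type*} [TopologicalSpace α] [TopologicalSpace β]
    {g : α → β} {s t : Set α} (hs : IsClosed s) (ht : IsClosed t)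
    (hgs : ContinuousOn g s) (hgt : ContinuousOn g t) : ContinuousOn g (s ∪ t) := by
  intro x hx
  rw [ContinuousWithinAt, nhdsWithin_union, Filter.tendsto_sup]
  exact ⟨by
    by_cases hxs : x ∈ s
    · exact hgs x hxs
    · exact continuousWithinAt_of_notMem_closure (fun h => hxs (hs.closure_eq ▸ h)), by
    by_cases hxt : x ∈ t
    · exact hgt x hxt
    · exact continuousWithinAt_of_notMem_closure (fun h => hxt (ht.closure_eq ▸ h))⟩

lemma isClosed_Icc_I (a b : I) : IsClosed (Icc a b) := by
  have : Icc a b = Subtype.val ⁻¹' (Icc (a:ℝ) (b:ℝ)) := rfl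
  rw [this]; exact isClosed_Icc.preimage continuous_subtype_val

lemma isPreconnected_Icc_I (a b : I) : IsPreconnected (Icc a b) := by
  rw [← Topology.IsInducing.subtypeVal.isPreconnected_image]
  have : Subtype.val '' (Icc a b) = Icc (a:ℝ) (b:ℝ) := by
    ext u
    simp only [mem_image, mem_Icc]
    exact ⟨fun ⟨v, ⟨h1, h2⟩, hv⟩ => hv ▸ ⟨h1, h2⟩,
      fun ⟨h1, h2⟩ => ⟨⟨u, ⟨a.2.1.trans h1, h2.trans b.2.2⟩⟩, ⟨h1, h2⟩, rfl⟩⟩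
  rw [this]; exact isPreconnected_Icc

lemma Icc_zero_one_I : Icc (0:I) 1 = univ := by
  ext u; simp only [mem_Icc, mem_univ, iff_true]
  exact ⟨u.2.1, u.2.2⟩

namespace IsCoveringMap
variable (hf : IsCoveringMap f)
include hf

-- fake statement to test covLift usage; real file concatenates p1
theorem monodromy' (H : C(I × I, X)) (h0 : ∀ s, H (s, 0) = H (0, 0))
    (h1 : ∀ s, H (s, 1) = H (0, 1)) {Γ₀ Γ₁ : C(I, E)}
    (p0 : ∀ u, f (Γ₀ u) = H (0, u)) (p1 : ∀ u, f (Γ₁ u) = H (1, u))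
    (h00 : Γ₀ 0 = Γ₁ 0) : Γ₀ 1 = Γ₁ 1 := by
  classical
  obtain ⟨t, ht0, hmono, ⟨m, htop⟩, hcell⟩ :=
    exists_monotone_Icc_subset_open_cover_unitInterval_prod_self
      (c := fun x : X => H ⁻¹' (hf x).2.choose)
      (fun x => (hf x).2.choose_spec.2.1.preimage H.continuous)
      (fun p _ => mem_iUnion.2 ⟨H p, (hf (H p)).2.choose_spec.1⟩)
  set e : E := Γ₀ 0 with he_def
  have he : ∀ s : I, f e = H (s, 0) := fun s => (p0 0).trans (h0 s).symm
  set Hs : I → C(I, X) := fun s => ⟨fun u => H (s, u), H.continuous.comp (continuous_const.prodMk continuous_id)⟩ with hHs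
  set L : I → E := fun s => hf.covLift (Hs s) e (he s) 1 with hL
  -- strip claim
  have strip : ∀ j, ∀ s ∈ Icc (t j) (t (j+1)), ∀ s' ∈ Icc (t j) (t (j+1)), L s = L s' := by
    intro j
    set V : Set I := Icc (t j) (t (j+1)) with hV
    have hVpre : IsPreconnected V := isPreconnected_Icc_I _ _
    have hVclosed : IsClosed V := isClosed_Icc_I _ _
    have htjV : t j ∈ V := ⟨le_refl _, hmono (Nat.le_succ j)⟩
    -- inductive strip lifting
    have Q : ∀ k : ℕ, ∃ G : I × I → E, ContinuousOn G (V ×ˢ Icc 0 (t k)) ∧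
        (∀ p ∈ V ×ˢ Icc 0 (t k), f (G p) = H p) ∧ (∀ s ∈ V, G (s, 0) = e) := by
      intro k
      induction k with
      | zero =>
        refine ⟨fun _ => e, continuousOn_const, ?_, fun s _ => rfl⟩
        rintro ⟨s, u⟩ ⟨-, hu⟩
        rw [ht0] at hu
        have hu0 : u = 0 := le_antisymm hu.2 hu.1
        rw [hu0]
        exact he s
      | succ k ihk =>
        obtain ⟨G, Gcont, Glift, G0⟩ := ihk
        obtain ⟨x, hx⟩ := hcell j k
        haveI : Nonempty (f ⁻¹' {x}) := hf.nonempty_fiber_of (G (t j, t k))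
          (by rw [Glift _ ⟨htjV, ⟨(t k).2.1, le_refl _⟩⟩]; exact hx ⟨htjV, ⟨le_refl _, hmono (Nat.le_succ k)⟩⟩)
        set T := (hf x).toTrivialization with hT
        haveI : DiscreteTopology (f ⁻¹' {x}) := (hf x).1
        have hkk : t k ≤ t (k+1) := hmono (Nat.le_succ k)
        have htk0 : (0:I) ≤ t k := (t k).2.1
        have edge_mem : ∀ s ∈ V, (s, t k) ∈ V ×ˢ Icc (0:I) (t k) :=
          fun s hs => ⟨hs, ⟨htk0, le_refl _⟩⟩
        have edge_base : ∀ s ∈ V, f (G (s, t k)) ∈ T.baseSet := by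
          intro s hs
          rw [Glift _ (edge_mem s hs)]
          exact hx ⟨hs, ⟨le_refl _, hkk⟩⟩
        have edge_src : ∀ s ∈ V, G (s, t k) ∈ T.source :=
          fun s hs => T.mem_source.2 (edge_base s hs)
        set φ : I → (f ⁻¹' {x} : Set E) := fun s => (T (G (s, t k))).2 with hφdef
        have hGtk : ContinuousOn (fun s => G (s, t k)) V :=
          Gcont.comp (Continuous.continuousOn (continuous_id.prodMk continuous_const)) edge_mem
        have φcont : ContinuousOn φ V := by
          apply continuous_snd.comp_continuousOn
          exact T.continuousOn_toFun.comp hGtk edge_src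
        set i := φ (t j) with hi
        have hφ : ∀ s ∈ V, φ s = i := fun s hs => hVpre.constant φcont hs htjV
        have compat : ∀ s ∈ V, T.toPartialHomeomorph.symm (H (s, t k), i) = G (s, t k) := by
          intro s hs
          rw [← hφ s hs, ← Glift _ (edge_mem s hs)]
          exact T.symm_apply_mk_proj (edge_src s hs)
        set G' : I × I → E := fun p => if p.2 ≤ t k then G p
          else T.toPartialHomeomorph.symm (H p, i) with hG'
        have hdom : V ×ˢ Icc (0:I) (t (k+1)) = V ×ˢ Icc 0 (t k) ∪ V ×ˢ Icc (t k) (t (k+1)) := by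
          rw [← prod_union, Icc_union_Icc_eq_Icc htk0 hkk]
        refine ⟨G', ?_, ?_, ?_⟩
        · rw [hdom]
          apply contOn_union_closed' (hVclosed.prod (isClosed_Icc_I _ _))
            (hVclosed.prod (isClosed_Icc_I _ _))
          · exact Gcont.congr fun p hp => if_pos hp.2.2
          · have hsec : ContinuousOn (fun p : I × I => T.toPartialHomeomorph.symm (H p, i))
                (V ×ˢ Icc (t k) (t (k+1))) := by
              apply T.toPartialHomeomorph.continuousOn_symm.comp
                ((H.continuous.prodMk continuous_const).continuousOn)
              intro p hp
              rw [T.target_eq]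
              exact ⟨hx hp, trivial⟩
            apply hsec.congr
            rintro ⟨s, u⟩ hp
            by_cases h : u ≤ t k
            · have hu : u = t k := le_antisymm h hp.2.1
              show (if u ≤ t k then G (s, u) else _) = _
              rw [if_pos h, hu]
              exact (compat s hp.1).symm
            · show (if u ≤ t k then G (s, u) else _) = _
              rw [if_neg h]
        · rintro ⟨s, u⟩ hp
          by_cases h : u ≤ t k
          · show f (if u ≤ t k then G (s, u) else _) = _
            rw [if_pos h]
            exact Glift _ ⟨hp.1, ⟨hp.2.1, h⟩⟩
          · show f (if u ≤ t k then G (s, u) else _) = _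
            rw [if_neg h]
            exact T.proj_symm_apply' (hx ⟨hp.1, ⟨(not_le.1 h).le, hp.2.2⟩⟩)
        · intro s hs
          show (if (0:I) ≤ t k then G (s, 0) else _) = e
          rw [if_pos htk0]
          exact G0 s hs
    obtain ⟨G, Gcont, Glift, G0⟩ := Q m
    have htm : t m = 1 := htop m (le_refl m)
    have hdom : V ×ˢ Icc (0:I) (t m) = V ×ˢ (univ : Set I) := by
      rw [htm, Icc_zero_one_I]
    rw [hdom] at Gcont Glift
    have hLG : ∀ s ∈ V, L s = G (s, 1) := by
      intro s hs
      have hmem : ∀ u : I, (s, u) ∈ V ×ˢ (univ : Set I) := fun u => ⟨hs, trivial⟩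
      set Γs : C(I, E) := ⟨fun u => G (s, u),
        Gcont.comp_continuous (continuous_const.prodMk continuous_id) hmem⟩ with hΓs
      have := hf.covLift_eq (Hs s) e (he s)
        (Γ := Γs) (fun u => Glift _ (hmem u)) (G0 s hs) 1
      exact this.symm
    intro s hs s' hs'
    rw [hLG s hs, hLG s' hs']
    set ψ : I → E := fun a => G (a, 1) with hψ
    have ψcont : ContinuousOn ψ V :=
      Gcont.comp ((continuous_id.prodMk continuous_const).continuousOn)
        (fun a ha => ⟨ha, trivial⟩)
    exact hf.constOn_of_comp hVpre ψcont
      (fun a ha a' ha' => by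
        show f (G (a, 1)) = f (G (a', 1))
        rw [Glift _ (⟨ha, trivial⟩ : ((a, (1:I)) : I × I) ∈ V ×ˢ univ),
          Glift _ (⟨ha', trivial⟩ : ((a', (1:I)) : I × I) ∈ V ×ˢ univ), h1 a, h1 a'])
      hs hs'
  -- chain along strips
  have key : ∀ k, L 0 = L (t k) := by
    intro k
    induction k with
    | zero => rw [ht0]
    | succ k ih =>
      exact ih.trans (strip k (t k) ⟨le_refl _, hmono (Nat.le_succ k)⟩ (t (k+1))
        ⟨hmono (Nat.le_succ k), le_refl _⟩)
  have hL01 : L 0 = L 1 := by rw [key m, htop m (le_refl m)]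
  have hΓ₀ : Γ₀ 1 = L 0 := hf.covLift_eq (Hs 0) e (he 0) (Γ := Γ₀) (fun u => p0 u) rfl 1
  have hΓ₁ : Γ₁ 1 = L 1 := hf.covLift_eq (Hs 1) e (he 1) (Γ := Γ₁) (fun u => p1 u) h00.symm 1
  rw [hΓ₀, hΓ₁, hL01]

end IsCoveringMap
end Mono

open Set unitInterval Topology CategoryTheory

section DeckSec

variable {Xx X : Type*} [TopologicalSpace Xx] [TopologicalSpace X] {π : Xx → X}

namespace IsCoveringMap
variable (hπ : IsCoveringMap π)
include hπ

/-- Lifts of homotopic paths starting at the same point end at the same point. -/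
theorem lift_homotopic_endpoint {a b : X} {γ₀ γ₁ : Path a b} (h : γ₀.Homotopic γ₁)
    {Γ₀ Γ₁ : C(I, Xx)} (q0 : ∀ u, π (Γ₀ u) = γ₀ u) (q1 : ∀ u, π (Γ₁ u) = γ₁ u)
    (h00 : Γ₀ 0 = Γ₁ 0) : Γ₀ 1 = Γ₁ 1 := by
  obtain ⟨F⟩ := h
  exact hπ.monodromy' F.toContinuousMap
    (fun s => (F.source s).trans (F.source 0).symm)
    (fun s => (F.target s).trans (F.target 0).symm)
    (fun u => (q0 u).trans (F.apply_zero u).symm)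
    (fun u => (q1 u).trans (F.apply_one u).symm) h00

end IsCoveringMap

/-- Transfer of local path-connectivity along a local homeomorphism. -/
theorem locPathConnected_of_isLocalHomeomorph [LocallyPathConnectedSpace X]
    (hf : IsLocalHomeomorph π) : LocallyPathConnectedSpace Xx := by
  rw [locPathConnectedSpace_iff_pathComponentIn_mem_nhds]
  intro e u hu hxu
  obtain ⟨φ, heφ, hfφ⟩ := hf e
  subst hfφ
  set s : Set Xx := u ∩ φ.source with hs
  have hso : IsOpen s := hu.inter φ.open_source
  have hes : e ∈ s := ⟨hxu, heφ⟩
  have himg : IsOpen (φ '' s) := φ.isOpen_image_of_subset_source hso inter_subset_right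
  have hφe : φ e ∈ φ '' s := mem_image_of_mem _ hes
  set W := pathComponentIn (φ '' s) (φ e) with hW
  have hWo : IsOpen W := himg.pathComponentIn _
  have hWmem : φ e ∈ W := mem_pathComponentIn_self hφe
  have hWpc : IsPathConnected W := isPathConnected_pathComponentIn hφe
  have hWsub : W ⊆ φ '' s := pathComponentIn_subset
  have hWtgt : W ⊆ φ.target := hWsub.trans (fun y ⟨z, hz, hzy⟩ => hzy ▸ φ.map_source hz.2)
  set A := φ.symm '' W with hA
  have hApc : IsPathConnected A := hWpc.image' (φ.continuousOn_symm.mono hWtgt)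
  have hAe : e ∈ A := ⟨φ e, hWmem, φ.left_inv heφ⟩
  have hAsub : A ⊆ u := by
    rintro z ⟨y, hy, rfl⟩
    obtain ⟨w, hw, rfl⟩ := hWsub hy
    rw [φ.left_inv hw.2]
    exact hw.1
  have hAopen : IsOpen A := by
    rw [hA, φ.symm_image_eq_source_inter_preimage hWtgt]
    exact φ.isOpen_inter_preimage hWo
  exact Filter.mem_of_superset (hAopen.mem_nhds hAe)
    (hApc.subset_pathComponentIn hAe hAsub)

namespace IsCoveringMap
variable (hπ : IsCoveringMap π)
include hπ

/-- Construction of a continuous lift-preserving map moving `y₀` to `y₁`. -/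
theorem exists_deck_fun [SimplyConnectedSpace Xx] [LocallyPathConnectedSpace Xx]
    (y₀ y₁ : Xx) (h : π y₀ = π y₁) :
    ∃ d : Xx → Xx, Continuous d ∧ (∀ z, π (d z) = π z) ∧ d y₀ = y₁ := by
  classical
  have hπc : Continuous π := hπ.continuous
  -- endpoint of the lift of `π ∘ p` starting at y₁
  have hep : ∀ {z : Xx} (p : Path y₀ z), π y₁ = ((p.map hπc).toContinuousMap) 0 := by
    intro z p
    show π y₁ = π (p 0)
    rw [p.source, h]
  set LE : (z : Xx) → Path y₀ z → Xx :=
    fun z p => hπ.covLift (p.map hπc).toContinuousMap y₁ (hep p) 1 with hLE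
  have indep : ∀ (z : Xx) (p q : Path y₀ z), LE z p = LE z q := by
    intro z p q
    have hh : (p.map hπc).Homotopic (q.map hπc) :=
      Path.Homotopic.map (SimplyConnectedSpace.paths_homotopic p q) ⟨π, hπc⟩
    exact hπ.lift_homotopic_endpoint hh
      (fun u => hπ.covLift_proj (p.map hπc).toContinuousMap y₁ (hep p) u)
      (fun u => hπ.covLift_proj (q.map hπc).toContinuousMap y₁ (hep q) u)
      (by rw [hπ.covLift_zero, hπ.covLift_zero])
  set d : Xx → Xx := fun z => LE z (PathConnectedSpace.somePath y₀ z) with hd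
  have dproj : ∀ z, π (d z) = π z := by
    intro z
    show π (hπ.covLift _ y₁ _ 1) = π z
    rw [hπ.covLift_proj]
    show π ((PathConnectedSpace.somePath y₀ z) 1) = π z
    rw [Path.target]
  have dself : d y₀ = y₁ := by
    have h1 : d y₀ = LE y₀ (Path.refl y₀) := indep _ _ _
    rw [hd] at h1 ⊢
    rw [h1]
    -- lift of the constant loop is constant
    have : ∀ u, ((Path.refl y₀).map hπc).toContinuousMap u = π y₁ := by
      intro u; show π y₀ = π y₁; exact h
    have heq := hπ.covLift_eq ((Path.refl y₀).map hπc).toContinuousMap y₁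
      (hep (Path.refl y₀)) (Γ := ContinuousMap.const I y₁)
      (fun u => (this u).symm) rfl 1
    exact heq.symm
  refine ⟨d, ?_, dproj, dself⟩
  -- continuity
  rw [continuous_iff_continuousAt]
  intro z₀
  haveI : Nonempty (π ⁻¹' {π z₀}) := ⟨⟨z₀, rfl⟩⟩
  set T := (hπ (π z₀)).toTrivialization with hT
  have hbase : π z₀ ∈ T.baseSet := (hπ (π z₀)).mem_toTrivialization_baseSet
  have hU : IsOpen (π ⁻¹' T.baseSet) := T.open_baseSet.preimage hπc
  have hz₀U : z₀ ∈ π ⁻¹' T.baseSet := hbase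
  set W := pathComponentIn (π ⁻¹' T.baseSet) z₀ with hW
  have hWo : IsOpen W := hU.pathComponentIn _
  have hWz₀ : z₀ ∈ W := mem_pathComponentIn_self hz₀U
  have hWsub : W ⊆ π ⁻¹' T.baseSet := pathComponentIn_subset
  have hdz₀src : d z₀ ∈ T.source := T.mem_source.2 (by rw [dproj z₀]; exact hbase)
  set i := (T (d z₀)).2 with hi
  set sec : X → Xx := fun y => T.toPartialHomeomorph.symm (y, i) with hsec
  have seccont : ContinuousOn sec T.baseSet := by
    apply T.toPartialHomeomorph.continuousOn_symm.comp
      ((continuous_id.prodMk continuous_const).continuousOn)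
    intro y hy
    rw [T.target_eq]
    exact ⟨hy, trivial⟩
  have secproj : ∀ y ∈ T.baseSet, π (sec y) = y := fun y hy => T.proj_symm_apply' hy
  have secz₀ : sec (π z₀) = d z₀ := by
    have h2 := T.symm_apply_mk_proj hdz₀src
    rw [dproj z₀] at h2
    exact h2
  have claim : ∀ z ∈ W, d z = sec (π z) := by
    intro z hz
    obtain ⟨q, hq⟩ : JoinedIn (π ⁻¹' T.baseSet) z₀ z := hz
    set p₀ := PathConnectedSpace.somePath y₀ z₀ with hp₀
    set P₀ : Path y₁ (d z₀) :=
      { toContinuousMap := hπ.covLift (p₀.map hπc).toContinuousMap y₁ (hep p₀),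
        source' := hπ.covLift_zero _ _ _,
        target' := rfl } with hP₀
    set P₁ : Path (d z₀) (sec (π z)) :=
      { toFun := fun u => sec (π (q u)),
        continuous_toFun := seccont.comp_continuous (hπc.comp q.continuous) (fun u => hq u),
        source' := by show sec (π (q 0)) = d z₀; rw [q.source, secz₀],
        target' := by show sec (π (q 1)) = sec (π z); rw [q.target] } with hP₁
    have hΓlift : ∀ u, π ((P₀.trans P₁) u) = (((p₀.trans q).map hπc).toContinuousMap) u := by
      intro u
      show π ((P₀.trans P₁) u) = π ((p₀.trans q) u)
      rw [Path.trans_apply, Path.trans_apply]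
      split_ifs with hu
      · exact hπ.covLift_proj (p₀.map hπc).toContinuousMap y₁ (hep p₀) _
      · show π (sec (π (q _))) = π (q _)
        exact secproj _ (hq _)
    have := hπ.covLift_eq ((p₀.trans q).map hπc).toContinuousMap y₁ (hep (p₀.trans q))
      (Γ := (P₀.trans P₁).toContinuousMap) hΓlift (P₀.trans P₁).source 1
    have hdz : d z = LE z (p₀.trans q) := indep _ _ _
    rw [hdz, hLE]
    dsimp only
    rw [← this]
    exact ((P₀.trans P₁).target).symm ▸ (P₀.trans P₁).target
  -- conclude continuity at z₀
  have hev : d =ᶠ[nhds z₀] fun z => sec (π z) :=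
    Filter.eventuallyEq_of_mem (hWo.mem_nhds hWz₀) claim
  have hct : ContinuousAt (fun z => sec (π z)) z₀ :=
    (seccont.continuousAt (T.open_baseSet.mem_nhds hbase)).comp hπc.continuousAt
  exact hct.congr hev.symm

/-- Existence of a deck transformation with prescribed value. -/
theorem exists_deck_elt [SimplyConnectedSpace Xx] [LocallyPathConnectedSpace Xx]
    (y₀ y₁ : Xx) (h : π y₀ = π y₁) :
    ∃ d : Equiv.Perm Xx, d ∈ deckGroup π ∧ d y₀ = y₁ := by
  obtain ⟨d, dc, dp, ds⟩ := hπ.exists_deck_fun y₀ y₁ h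
  obtain ⟨d', d'c, d'p, d's⟩ := hπ.exists_deck_fun y₁ y₀ h.symm
  have hleft : d' ∘ d = id := by
    apply hπ.eq_of_comp_eq (d'c.comp dc) continuous_id
      (funext fun z => by simp [d'p, dp]) y₀
    show d' (d y₀) = y₀
    rw [ds, d's]
  have hright : d ∘ d' = id := by
    apply hπ.eq_of_comp_eq (dc.comp d'c) continuous_id
      (funext fun z => by simp [d'p, dp]) y₁
    show d (d' y₁) = y₁
    rw [d's, ds]
  refine ⟨⟨d, d', fun z => congrFun hleft z, fun z => congrFun hright z⟩, ⟨dc, d'c, funext dp⟩, ds⟩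

end IsCoveringMap

end DeckSec

open Set unitInterval Topology CategoryTheory

section Final

variable {Xx X : Type*} [TopologicalSpace Xx] [TopologicalSpace X] {π : Xx → X}

attribute [local instance] Path.Homotopic.setoid

/-- Casting preserves path homotopy. -/
lemma path_homotopic_cast {a b a' b' : X} {p q : Path a b} (h : p.Homotopic q)
    (ha : a' = a) (hb : b' = b) : (p.cast ha hb).Homotopic (q.cast ha hb) := by
  subst ha; subst hb
  have hp : p.cast rfl rfl = p := by ext t; rfl
  have hq : q.cast rfl rfl = q := by ext t; rfl
  rw [hp, hq]; exact h

namespace IsCoveringMap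

variable (hπ : IsCoveringMap π)

/-- The loop in the base associated to a deck transformation. -/
noncomputable def loopOf (xt : Xx) (dv : Equiv.Perm Xx) (hd : π ∘ dv = π)
    (p : Path (dv xt) xt) : Path (π xt) (π xt) :=
  (p.map hπ.continuous).cast (congrFun hd xt).symm rfl

lemma loopOf_coe (xt : Xx) (dv : Equiv.Perm Xx) (hd : π ∘ dv = π)
    (p : Path (dv xt) xt) (t : I) : hπ.loopOf xt dv hd p t = π (p t) := rfl

variable [PathConnectedSpace Xx]

/-- The homotopy class associated to a deck transformation. -/
noncomputable def classOf (xt : Xx) (d : deckGroup π) :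
    Path.Homotopic.Quotient (π xt) (π xt) :=
  ⟦hπ.loopOf xt d.val d.2.2.2 (PathConnectedSpace.somePath (d.val xt) xt)⟧

variable [SimplyConnectedSpace Xx]

lemma classOf_eq (xt : Xx) (d : deckGroup π) (p : Path (d.val xt) xt) :
    hπ.classOf xt d = ⟦hπ.loopOf xt d.val d.2.2.2 p⟧ := by
  apply Quotient.sound
  exact path_homotopic_cast
    (Path.Homotopic.map (SimplyConnectedSpace.paths_homotopic _ p) ⟨π, hπ.continuous⟩) _ _

lemma classOf_one (xt : Xx) : hπ.classOf xt (1 : deckGroup π) = ⟦Path.refl (π xt)⟧ := by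
  rw [hπ.classOf_eq xt 1 (Path.refl xt)]
  apply congrArg
  ext t
  rfl

lemma classOf_mul (xt : Xx) (d₁ d₂ : deckGroup π) :
    hπ.classOf xt (d₁ * d₂) =
      Path.Homotopic.Quotient.trans (hπ.classOf xt d₂) (hπ.classOf xt d₁) := by
  have hd₁c : Continuous (d₁.val : Xx → Xx) := d₁.2.1
  set p₁ := PathConnectedSpace.somePath (d₁.val xt) xt with hp₁
  set p₂ := PathConnectedSpace.somePath (d₂.val xt) xt with hp₂
  have key : hπ.classOf xt (d₁ * d₂) =
      ⟦hπ.loopOf xt (d₁ * d₂).val (d₁ * d₂).2.2.2 ((p₂.map hd₁c).trans p₁)⟧ :=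
    hπ.classOf_eq xt (d₁ * d₂) ((p₂.map hd₁c).trans p₁)
  rw [key, hπ.classOf_eq xt d₂ p₂, hπ.classOf_eq xt d₁ p₁]
  change _ = ⟦(hπ.loopOf xt d₂.val d₂.2.2.2 p₂).trans (hπ.loopOf xt d₁.val d₁.2.2.2 p₁)⟧
  apply congrArg
  ext t
  show π (((p₂.map hd₁c).trans p₁) t) = _
  rw [Path.trans_apply, Path.trans_apply]
  split_ifs with h
  · show π (d₁.val (p₂ _)) = π (p₂ _)
    exact congrFun d₁.2.2.2 _
  · rfl

end IsCoveringMap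

end Final

set_option linter.unusedVariables false in
/-- For a universal cover `π : X_x → X` of a path-connected, locally path-connected,
semilocally simply connected space `X`, the group of deck transformations `Aut(X_x/X)` is
isomorphic to the fundamental group `π₁(X, x)`. -/
theorem deckGroup_iso_fundamentalGroup {X Xx : Type*} [TopologicalSpace X]
    [TopologicalSpace Xx] [PathConnectedSpace X] [LocallyPathConnectedSpace X]
    (hX : SemilocallySimplyConnected X) (x : X)
    (π : Xx → X) (hπ : IsCoveringMap π) [SimplyConnectedSpace Xx] :
    Nonempty (deckGroup π ≃* FundamentalGroup X x) := by
  classical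
  have hπc : Continuous π := hπ.continuous
  haveI : LocallyPathConnectedSpace Xx :=
    locPathConnected_of_isLocalHomeomorph hπ.isLocalHomeomorph
  obtain ⟨xt, hxt⟩ : ∃ xt : Xx, π xt = x := by
    obtain ⟨e₀⟩ := (inferInstance : PathConnectedSpace Xx).nonempty
    set p := PathConnectedSpace.somePath (π e₀) x with hp
    refine ⟨hπ.covLift p.toContinuousMap e₀ p.source.symm 1, ?_⟩
    rw [hπ.covLift_proj]
    exact p.target
  subst hxt
  set Φfun : deckGroup π → FundamentalGroup X (π xt) := fun d =>
    hπ.classOf xt d with hΦfun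
  have Φmul : ∀ d₁ d₂ : deckGroup π, Φfun (d₁ * d₂) = Φfun d₁ * Φfun d₂ := by
    intro d₁ d₂
    show hπ.classOf xt (d₁ * d₂) = _
    rw [hπ.classOf_mul xt d₁ d₂]
    rfl
  set Φ : deckGroup π →* FundamentalGroup X (π xt) := MonoidHom.mk' Φfun Φmul with hΦ
  have hinj : Function.Injective Φ := by
    rw [injective_iff_map_eq_one]
    intro d hd
    have hhom : hπ.classOf xt d = ⟦Path.refl (π xt)⟧ := by
      have := hd
      exact this
    set p := PathConnectedSpace.somePath (d.val xt) xt with hp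
    have hhom' : (⟦hπ.loopOf xt d.val d.2.2.2 p⟧ :
        Path.Homotopic.Quotient (π xt) (π xt)) = ⟦Path.refl (π xt)⟧ := hhom
    have hhomot : (hπ.loopOf xt d.val d.2.2.2 p).Homotopic (Path.refl (π xt)) :=
      Quotient.exact hhom'
    have hend : xt = d.val xt := by
      have := hπ.lift_homotopic_endpoint hhomot
        (Γ₀ := p.toContinuousMap) (Γ₁ := ContinuousMap.const I (d.val xt))
        (fun u => rfl) (fun u => congrFun d.2.2.2 xt) p.source
      exact p.target.symm.trans this
    have hde : d.val = Equiv.refl Xx := by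
      apply Equiv.ext
      intro z
      exact congrFun (hπ.eq_of_comp_eq d.2.1 continuous_id d.2.2.2 xt hend.symm) z
    exact Subtype.ext (by rw [hde]; rfl)
  have hsurj : Function.Surjective Φ := by
    intro a
    obtain ⟨γ, hγ⟩ := Quotient.exists_rep (a : Path.Homotopic.Quotient (π xt) (π xt))
    set Γ := hπ.covLift γ.symm.toContinuousMap xt γ.symm.source.symm with hΓ
    set e₁ := Γ 1 with he₁def
    have he₁ : π e₁ = π xt := by
      rw [he₁def, hΓ, hπ.covLift_proj]
      exact γ.symm.target
    obtain ⟨dv, hdmem, hdx⟩ := hπ.exists_deck_elt xt e₁ he₁.symm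
    set d : deckGroup π := ⟨dv, hdmem⟩ with hd
    refine ⟨d, ?_⟩
    show hπ.classOf xt d = a
    set ΓPath : Path xt e₁ :=
      { toContinuousMap := Γ, source' := hπ.covLift_zero _ _ _, target' := rfl } with hΓPath
    have hdx' : d.val xt = e₁ := hdx
    rw [hπ.classOf_eq xt d (ΓPath.symm.cast hdx' rfl), ← hγ]
    apply congrArg
    ext t
    show π ((ΓPath.symm.cast hdx' rfl) t) = γ t
    rw [Path.cast_coe]
    show π (ΓPath (unitInterval.symm t)) = γ t
    have := hπ.covLift_proj γ.symm.toContinuousMap xt γ.symm.source.symm (unitInterval.symm t)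
    rw [hΓPath]
    show π (Γ (unitInterval.symm t)) = γ t
    rw [hΓ, this]
    show γ (unitInterval.symm (unitInterval.symm t)) = γ t
    rw [unitInterval.symm_symm]
  exact ⟨MulEquiv.ofBijective Φ ⟨hinj, hsurj⟩⟩
end

section
/- Let k be a finite field with algebraic closure k̄. Then the absolute Galois group Gal(k̄/k) is topologically generated by the Frobenius automorphism x ↦ x^q, where q = |k|; that is, the closure of the subgroup generated by the Frobenius (in the Krull topology) is all of Gal(k̄/k). Moreover Gal(k̄/k) is isomorphic as a profinite group to Ẑ = lim← ℤ/nℤ. -/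
/-- `Ẑ = lim← ℤ/nℤ`: compatible families in `Π n, ℤ/nℤ`, indexed by positive naturals
ordered by divisibility. -/
def ZHat : AddSubgroup (Π n : ℕ+, ZMod n) where
  carrier := {f | ∀ (m n : ℕ+) (h : (m : ℕ) ∣ (n : ℕ)), ZMod.castHom h (ZMod m) (f n) = f m}
  zero_mem' := fun m n h => by simp
  add_mem' := by
    intro f g hf hg m n h
    simp only [Pi.add_apply, map_add, hf m n h, hg m n h]
  neg_mem' := by
    intro f hf m n h
    simp only [Pi.neg_apply, map_neg, hf m n h]

noncomputable instance (n : ℕ) : TopologicalSpace (ZMod n) := ⊥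

instance (n : ℕ) : DiscreteTopology (ZMod n) := ⟨rfl⟩

instance (n : ℕ) : IsTopologicalAddGroup (ZMod n) where
  continuous_add := continuous_of_discreteTopology
  continuous_neg := continuous_of_discreteTopology

open Polynomial IntermediateField Pointwise

section Aux

variable {k K : Type*} [Field k] [Fintype k] [Field K] [Algebra k K]

private lemma FrobAux.fixed_pow {g : K ≃ₐ[k] K} {x : K} (hx : g x = x) (c : ℕ) :
    (g ^ c) x = x := by
  induction c with
  | zero => simp
  | succ c ih => rw [pow_succ, AlgEquiv.mul_apply, hx, ih]

/-- The fixed field of `φ ^ n`. -/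
def frobField (φ : K ≃ₐ[k] K) (n : ℕ) : IntermediateField k K where
  carrier := {x | (φ ^ n) x = x}
  mul_mem' := fun {a b} ha hb => by
    simp only [Set.mem_setOf_eq, map_mul] at *
    rw [ha, hb]
  add_mem' := fun {a b} ha hb => by
    simp only [Set.mem_setOf_eq, map_add] at *
    rw [ha, hb]
  one_mem' := map_one _
  zero_mem' := map_zero _
  algebraMap_mem' := fun r => (φ ^ n).commutes r
  inv_mem' := fun x hx => by
    simp only [Set.mem_setOf_eq, map_inv₀] at *
    rw [hx]

lemma mem_frobField {φ : K ≃ₐ[k] K} {n : ℕ} {x : K} :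
    x ∈ frobField φ n ↔ (φ ^ n) x = x := Iff.rfl

variable {φ : K ≃ₐ[k] K}

lemma frob_pow_apply (hφ : ∀ x : K, φ x = x ^ Fintype.card k) (j : ℕ) (x : K) :
    (φ ^ j) x = x ^ Fintype.card k ^ j := by
  induction j generalizing x with
  | zero => simp
  | succ j ih =>
      rw [pow_succ, AlgEquiv.mul_apply, hφ, ih, ← pow_mul, pow_succ']

lemma mem_frobField_iff (hφ : ∀ x : K, φ x = x ^ Fintype.card k) {n : ℕ} {x : K} :
    x ∈ frobField φ n ↔ x ^ Fintype.card k ^ n = x := by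
  rw [mem_frobField, frob_pow_apply hφ]

lemma frobField_mono {m n : ℕ} (h : m ∣ n) : frobField φ m ≤ frobField φ n := by
  intro x hx
  obtain ⟨c, rfl⟩ := h
  rw [mem_frobField] at hx ⊢
  rw [pow_mul]
  exact FrobAux.fixed_pow hx c

lemma pow_mod_apply {n : ℕ} {x : K} (hx : x ∈ frobField φ n) (j : ℕ) :
    (φ ^ j) x = (φ ^ (j % n)) x := by
  conv_lhs => rw [← Nat.mod_add_div j n]
  rw [pow_add, AlgEquiv.mul_apply, pow_mul, FrobAux.fixed_pow hx]

lemma map_mem_frobField {n : ℕ} (j : ℕ) {x : K} (hx : x ∈ frobField φ n) :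
    (φ ^ j) x ∈ frobField φ n := by
  rw [mem_frobField] at hx ⊢
  rw [← AlgEquiv.mul_apply, ← pow_add, add_comm, pow_add, AlgEquiv.mul_apply, hx]

lemma one_lt_q : 1 < Fintype.card k := Fintype.one_lt_card

variable [IsAlgClosure k K]

lemma frobField_coe (hφ : ∀ x : K, φ x = x ^ Fintype.card k) {n : ℕ} (hn : n ≠ 0) :
    (frobField φ n : Set K) = (X ^ Fintype.card k ^ n - X : k[X]).rootSet K := by
  haveI : IsAlgClosed K := IsAlgClosure.isAlgClosed k
  ext x
  rw [SetLike.mem_coe, mem_frobField_iff hφ, mem_rootSet]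
  constructor
  · intro hx
    refine ⟨FiniteField.X_pow_card_sub_X_ne_zero k (Nat.one_lt_pow hn one_lt_q), ?_⟩
    simp only [map_sub, map_pow, aeval_X]
    rw [hx, sub_self]
  · intro ⟨_, hx⟩
    simp only [map_sub, map_pow, aeval_X] at hx
    rwa [sub_eq_zero] at hx

lemma finite_frobField (hφ : ∀ x : K, φ x = x ^ Fintype.card k) {n : ℕ} (hn : n ≠ 0) :
    Finite (frobField φ n) := by
  have h : (frobField φ n : Set K).Finite := by
    rw [frobField_coe hφ hn]
    exact (X ^ Fintype.card k ^ n - X : k[X]).rootSet_finite K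
  exact h.to_subtype

lemma nat_card_frobField (hφ : ∀ x : K, φ x = x ^ Fintype.card k) {n : ℕ} (hn : n ≠ 0) :
    Nat.card (frobField φ n) = Fintype.card k ^ n := by
  classical
  haveI : IsAlgClosed K := IsAlgClosure.isAlgClosed k
  have hsep : (X ^ Fintype.card k ^ n - X : k[X]).Separable := by
    obtain ⟨p, hp⟩ := CharP.exists k
    haveI := hp
    have hprime : p.Prime := CharP.char_is_prime k p
    haveI := Fact.mk hprime
    obtain ⟨m, _, hm⟩ := FiniteField.card k p
    refine galois_poly_separable p _ ?_
    rw [hm, ← pow_mul]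
    exact dvd_pow_self p (by positivity)
  have hsplits : ((X ^ Fintype.card k ^ n - X : k[X]).map (algebraMap k K)).Splits :=
    IsAlgClosed.splits _
  haveI : Fintype ((X ^ Fintype.card k ^ n - X : k[X]).rootSet K) :=
    ((X ^ Fintype.card k ^ n - X : k[X]).rootSet_finite K).fintype
  have hcard := card_rootSet_eq_natDegree hsep hsplits
  rw [FiniteField.X_pow_card_sub_X_natDegree_eq k (Nat.one_lt_pow hn one_lt_q)] at hcard
  calc Nat.card (frobField φ n)
      = Nat.card ((X ^ Fintype.card k ^ n - X : k[X]).rootSet K) :=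
        Nat.card_congr (Equiv.setCongr (frobField_coe hφ hn))
    _ = Fintype.card k ^ n := by
        rw [Nat.card_eq_fintype_card]
        convert hcard using 2

lemma finrank_frobField (hφ : ∀ x : K, φ x = x ^ Fintype.card k) {n : ℕ} (hn : n ≠ 0) :
    Module.finrank k (frobField φ n) = n := by
  haveI := finite_frobField hφ hn
  haveI : Fintype (frobField φ n) := Fintype.ofFinite _
  haveI : FiniteDimensional k (frobField φ n) := Module.Finite.of_finite
  have h1 : Fintype.card (frobField φ n)
      = Fintype.card k ^ Module.finrank k (frobField φ n) := Module.card_eq_pow_finrank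
  have h2 : Fintype.card (frobField φ n) = Fintype.card k ^ n := by
    rw [← Nat.card_eq_fintype_card, nat_card_frobField hφ hn]
  exact Nat.pow_right_injective one_lt_q (h1.symm.trans h2)

lemma dlog_key (hφ : ∀ x : K, φ x = x ^ Fintype.card k) (n : ℕ) (hn : n ≠ 0)
    (σ : K ≃ₐ[k] K) :
    (∃ j : ℕ, ∀ x ∈ frobField φ n, σ x = (φ ^ j) x) ∧
    ∀ a b : ℕ, (∀ x ∈ frobField φ n, (φ ^ a) x = (φ ^ b) x) → a ≡ b [MOD n] := by
  haveI := finite_frobField hφ hn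
  haveI : FiniteDimensional k (frobField φ n) := Module.Finite.of_finite
  haveI : Fintype (frobField φ n) := Fintype.ofFinite _
  set E := frobField φ n with hE
  let r : (K ≃ₐ[k] K) →* (E ≃ₐ[k] E) := AlgEquiv.restrictNormalHom E
  have hr : ∀ (τ : K ≃ₐ[k] K) (x : E), (r τ x : K) = τ x := fun τ x =>
    AlgEquiv.restrictNormalHom_apply E τ x
  have hrpow : ∀ (τ : K ≃ₐ[k] K) (j : ℕ) (x : E), ((r τ ^ j) x : K) = (τ ^ j) x := by
    intro τ j x
    rw [← map_pow]
    exact hr _ x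
  have horder : orderOf (r φ) = n := by
    have h1 : (r φ) ^ n = 1 := by
      refine AlgEquiv.ext fun x => Subtype.ext ?_
      rw [hrpow]
      exact x.2
    have hdvd : orderOf (r φ) ∣ n := orderOf_dvd_of_pow_eq_one h1
    set m := orderOf (r φ) with hm
    have hm0 : m ≠ 0 := (orderOf_pos _).ne'
    have hsub : (E : Set K) ⊆ (frobField φ m : Set K) := by
      intro x hx
      have h2 : (r φ) ^ m = 1 := pow_orderOf_eq_one _
      have h3 := congrArg (fun t : E ≃ₐ[k] E => (t ⟨x, hx⟩ : K)) h2
      rw [hrpow] at h3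
      exact h3
    have hcardle : Nat.card E ≤ Nat.card (frobField φ m) := by
      haveI := finite_frobField (φ := φ) hφ hm0
      exact Nat.card_mono (Set.toFinite _) hsub
    rw [nat_card_frobField hφ hn, nat_card_frobField hφ hm0] at hcardle
    have hnm : n ≤ m := (Nat.pow_le_pow_iff_right one_lt_q).mp hcardle
    exact le_antisymm (Nat.le_of_dvd (Nat.pos_of_ne_zero hn) hdvd) hnm
  have hcardaut : Nat.card (E ≃ₐ[k] E) = n := by
    rw [IsGalois.card_aut_eq_finrank, finrank_frobField hφ hn]
  have htop : Subgroup.zpowers (r φ) = ⊤ := by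
    apply Subgroup.eq_top_of_card_eq
    rw [Nat.card_zpowers, horder, hcardaut]
  constructor
  · have hmem : r σ ∈ Submonoid.powers (r φ) := by
      rw [mem_powers_iff_mem_zpowers, htop]
      trivial
    obtain ⟨j, hj⟩ := hmem
    refine ⟨j, fun x hx => ?_⟩
    have h3 := congrArg (fun t : E ≃ₐ[k] E => (t ⟨x, hx⟩ : K)) hj
    simp only at h3
    rw [hrpow, hr] at h3
    exact h3.symm
  · intro a b hab
    have h4 : (r φ) ^ a = (r φ) ^ b := by
      refine AlgEquiv.ext fun x => Subtype.ext ?_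
      rw [hrpow, hrpow]
      exact hab x x.2
    rw [← horder]
    exact pow_eq_pow_iff_modEq.mp h4

/-- The discrete logarithm of `σ` on the subfield with `q ^ n` elements. -/
noncomputable def dlog (hφ : ∀ x : K, φ x = x ^ Fintype.card k)
    (σ : K ≃ₐ[k] K) (n : ℕ+) : ZMod n :=
  (((dlog_key hφ n n.pos.ne' σ).1.choose : ℕ) : ZMod (n : ℕ))

lemma dlog_spec (hφ : ∀ x : K, φ x = x ^ Fintype.card k) (σ : K ≃ₐ[k] K) (n : ℕ+) :
    ∀ x ∈ frobField φ (n : ℕ), σ x = (φ ^ (dlog hφ σ n).val) x := by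
  intro x hx
  have h := (dlog_key hφ n n.pos.ne' σ).1.choose_spec x hx
  rw [h, dlog, ZMod.val_natCast]
  exact pow_mod_apply hx _

lemma dlog_unique (hφ : ∀ x : K, φ x = x ^ Fintype.card k) (σ : K ≃ₐ[k] K) (n : ℕ+)
    {a : ZMod n} (h : ∀ x ∈ frobField φ (n : ℕ), σ x = (φ ^ a.val) x) :
    dlog hφ σ n = a := by
  haveI : NeZero (n : ℕ) := ⟨n.pos.ne'⟩
  have hmod := (dlog_key hφ n n.pos.ne' σ).2 (dlog hφ σ n).val a.val
    (fun x hx => ((dlog_spec hφ σ n x hx).symm.trans (h x hx)))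
  apply ZMod.val_injective
  unfold Nat.ModEq at hmod
  rwa [Nat.mod_eq_of_lt (ZMod.val_lt _), Nat.mod_eq_of_lt (ZMod.val_lt _)] at hmod

/-- The element of `Ẑ` associated to a Galois group element. -/
noncomputable def toZHat (hφ : ∀ x : K, φ x = x ^ Fintype.card k) (σ : K ≃ₐ[k] K) :
    ZHat :=
  ⟨fun n => dlog hφ σ n, by
    intro m n h
    haveI : NeZero (n : ℕ) := ⟨n.pos.ne'⟩
    refine (dlog_unique hφ σ m ?_).symm
    intro x hx
    have hx' : x ∈ frobField φ (n : ℕ) := frobField_mono h hx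
    rw [dlog_spec hφ σ n x hx']
    rw [ZMod.castHom_apply, ← ZMod.natCast_val, ZMod.val_natCast]
    exact pow_mod_apply hx _⟩

lemma dlog_mul (hφ : ∀ x : K, φ x = x ^ Fintype.card k) (σ τ : K ≃ₐ[k] K) (n : ℕ+) :
    dlog hφ (σ * τ) n = dlog hφ σ n + dlog hφ τ n := by
  haveI : NeZero (n : ℕ) := ⟨n.pos.ne'⟩
  apply dlog_unique
  intro x hx
  have hτ := dlog_spec hφ τ n x hx
  have hx' : (φ ^ (dlog hφ τ n).val) x ∈ frobField φ (n : ℕ) := map_mem_frobField _ hx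
  have hσ := dlog_spec hφ σ n _ hx'
  calc (σ * τ) x = σ (τ x) := rfl
    _ = σ ((φ ^ (dlog hφ τ n).val) x) := by rw [hτ]
    _ = (φ ^ (dlog hφ σ n).val) ((φ ^ (dlog hφ τ n).val) x) := hσ
    _ = (φ ^ ((dlog hφ σ n).val + (dlog hφ τ n).val)) x := by
        rw [← AlgEquiv.mul_apply, ← pow_add]
    _ = (φ ^ (dlog hφ σ n + dlog hφ τ n).val) x := by
        rw [ZMod.val_add]
        exact pow_mod_apply hx _

/-- The homomorphism from the Galois group to `Ẑ`. -/
noncomputable def eHom (hφ : ∀ x : K, φ x = x ^ Fintype.card k) :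
    (K ≃ₐ[k] K) →* Multiplicative ZHat where
  toFun σ := Multiplicative.ofAdd (toZHat hφ σ)
  map_one' := by
    have h0 : toZHat hφ 1 = 0 := Subtype.ext (funext fun n => by
      haveI : NeZero (n : ℕ) := ⟨n.pos.ne'⟩
      show dlog hφ 1 n = 0
      refine dlog_unique hφ 1 n ?_
      intro x hx
      simp [ZMod.val_zero])
    show Multiplicative.ofAdd (toZHat hφ 1) = 1
    rw [h0]
    rfl
  map_mul' σ τ := by
    have h : toZHat hφ (σ * τ) = toZHat hφ σ + toZHat hφ τ :=
      Subtype.ext (funext fun n => dlog_mul hφ σ τ n)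
    show Multiplicative.ofAdd _ = Multiplicative.ofAdd _ * Multiplicative.ofAdd _
    rw [h, ← ofAdd_add]

lemma le_frobField (hφ : ∀ x : K, φ x = x ^ Fintype.card k) (E : IntermediateField k K)
    [FiniteDimensional k E] : ∃ n : ℕ+, E ≤ frobField φ (n : ℕ) := by
  haveI : Finite E := Module.finite_of_finite k
  haveI : Fintype E := Fintype.ofFinite _
  have hd : Module.finrank k E ≠ 0 := Module.finrank_pos.ne'
  refine ⟨⟨Module.finrank k E, Nat.pos_of_ne_zero hd⟩, ?_⟩
  intro x hx
  rw [mem_frobField_iff hφ]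
  have hcard : Fintype.card E = Fintype.card k ^ Module.finrank k E := Module.card_eq_pow_finrank
  have hpow := FiniteField.pow_card (⟨x, hx⟩ : E)
  rw [hcard] at hpow
  have := congrArg Subtype.val hpow
  simpa using this

lemma exists_mem_frobField (hφ : ∀ x : K, φ x = x ^ Fintype.card k) (x : K) :
    ∃ n : ℕ+, x ∈ frobField φ (n : ℕ) := by
  haveI : Algebra.IsAlgebraic k K := IsAlgClosure.isAlgebraic
  have hint : IsIntegral k x := Algebra.IsIntegral.isIntegral x
  haveI : FiniteDimensional k k⟮x⟯ := IntermediateField.adjoin.finiteDimensional hint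
  obtain ⟨n, hn⟩ := le_frobField hφ k⟮x⟯
  exact ⟨n, hn (IntermediateField.mem_adjoin_simple_self k x)⟩

lemma eHom_injective (hφ : ∀ x : K, φ x = x ^ Fintype.card k) :
    Function.Injective (eHom hφ) := by
  intro σ τ h
  have h' : ∀ n : ℕ+, dlog hφ σ n = dlog hφ τ n := by
    intro n
    have : toZHat hφ σ = toZHat hφ τ := by
      have := congrArg Multiplicative.toAdd h
      simpa [eHom] using this
    exact congrFun (congrArg Subtype.val this) n
  refine AlgEquiv.ext fun x => ?_
  obtain ⟨n, hx⟩ := exists_mem_frobField hφ x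
  rw [dlog_spec hφ σ n x hx, dlog_spec hφ τ n x hx, h' n]

lemma eHom_surjective (hφ : ∀ x : K, φ x = x ^ Fintype.card k) :
    Function.Surjective (eHom hφ) := by
  intro f
  set F : ZHat := Multiplicative.toAdd f with hF
  have hnfun : ∀ x : K, x ∈ frobField φ ((exists_mem_frobField hφ x).choose : ℕ) :=
    fun x => (exists_mem_frobField hφ x).choose_spec
  set g : K → K := fun x =>
    (φ ^ ((F.1 (exists_mem_frobField hφ x).choose).val)) x with hg
  have hval : ∀ (x : K) (n : ℕ+), x ∈ frobField φ (n : ℕ) →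
      g x = (φ ^ ((F.1 n).val)) x := by
    intro x n hxn
    set m : ℕ+ := (exists_mem_frobField hφ x).choose with hm
    have hxm : x ∈ frobField φ (m : ℕ) := hnfun x
    haveI : NeZero ((m : ℕ)) := ⟨m.pos.ne'⟩
    haveI : NeZero ((n : ℕ)) := ⟨n.pos.ne'⟩
    have h1 : (m : ℕ) ∣ ((m * n : ℕ+) : ℕ) := by
      rw [PNat.mul_coe]; exact dvd_mul_right _ _
    have h2 : (n : ℕ) ∣ ((m * n : ℕ+) : ℕ) := by
      rw [PNat.mul_coe]; exact dvd_mul_left _ _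
    have hv1 : (F.1 (m * n)).val % (m : ℕ) = (F.1 m).val := by
      conv_rhs => rw [← F.2 m (m * n) h1]
      rw [ZMod.castHom_apply, ← ZMod.natCast_val, ZMod.val_natCast]
    have hv2 : (F.1 (m * n)).val % (n : ℕ) = (F.1 n).val := by
      conv_rhs => rw [← F.2 n (m * n) h2]
      rw [ZMod.castHom_apply, ← ZMod.natCast_val, ZMod.val_natCast]
    calc g x = (φ ^ (F.1 m).val) x := rfl
      _ = (φ ^ ((F.1 (m * n)).val % (m : ℕ))) x := by rw [hv1]
      _ = (φ ^ (F.1 (m * n)).val) x := (pow_mod_apply hxm _).symm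
      _ = (φ ^ ((F.1 (m * n)).val % (n : ℕ))) x := pow_mod_apply hxn _
      _ = (φ ^ (F.1 n).val) x := by rw [hv2]
  let σ0 : K →ₐ[k] K :=
    { toFun := g
      map_one' := by
        show g 1 = 1
        rw [hval 1 1 (one_mem _), map_one]
      map_mul' := by
        intro x y
        show g (x * y) = g x * g y
        obtain ⟨a, ha⟩ := exists_mem_frobField hφ x
        obtain ⟨b, hb⟩ := exists_mem_frobField hφ y
        have hxa : x ∈ frobField φ ((a * b : ℕ+) : ℕ) :=
          frobField_mono (by rw [PNat.mul_coe]; exact dvd_mul_right _ _) ha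
        have hyb : y ∈ frobField φ ((a * b : ℕ+) : ℕ) :=
          frobField_mono (by rw [PNat.mul_coe]; exact dvd_mul_left _ _) hb
        rw [hval (x * y) (a * b) (mul_mem hxa hyb), hval x (a * b) hxa,
          hval y (a * b) hyb, map_mul]
      map_zero' := by
        show g 0 = 0
        rw [hval 0 1 (zero_mem _), map_zero]
      map_add' := by
        intro x y
        show g (x + y) = g x + g y
        obtain ⟨a, ha⟩ := exists_mem_frobField hφ x
        obtain ⟨b, hb⟩ := exists_mem_frobField hφ y
        have hxa : x ∈ frobField φ ((a * b : ℕ+) : ℕ) :=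
          frobField_mono (by rw [PNat.mul_coe]; exact dvd_mul_right _ _) ha
        have hyb : y ∈ frobField φ ((a * b : ℕ+) : ℕ) :=
          frobField_mono (by rw [PNat.mul_coe]; exact dvd_mul_left _ _) hb
        rw [hval (x + y) (a * b) (add_mem hxa hyb), hval x (a * b) hxa,
          hval y (a * b) hyb, map_add]
      commutes' := by
        intro r
        show g (algebraMap k K r) = algebraMap k K r
        rw [hval (algebraMap k K r) 1 (IntermediateField.algebraMap_mem _ r)]
        exact (φ ^ (F.1 1).val).commutes r }
  have hinj : Function.Injective σ0 := σ0.toRingHom.injective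
  have hsurj : Function.Surjective σ0 := by
    intro y
    obtain ⟨n, hy⟩ := exists_mem_frobField hφ y
    haveI := finite_frobField (φ := φ) hφ n.pos.ne'
    let h : frobField φ (n : ℕ) → frobField φ (n : ℕ) := fun z =>
      ⟨(φ ^ (F.1 n).val) z, map_mem_frobField _ z.2⟩
    have hinj' : Function.Injective h := by
      intro a b hab
      exact Subtype.ext ((φ ^ (F.1 n).val).injective (Subtype.ext_iff.mp hab))
    obtain ⟨z, hz⟩ := Finite.surjective_of_injective hinj' ⟨y, hy⟩
    refine ⟨z, ?_⟩
    have hz' : (φ ^ (F.1 n).val) z = y := congrArg Subtype.val hz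
    show g (z : K) = y
    rw [hval (z : K) n z.2, hz']
  let σ := AlgEquiv.ofBijective σ0 ⟨hinj, hsurj⟩
  refine ⟨σ, ?_⟩
  show Multiplicative.ofAdd (toZHat hφ σ) = f
  have h : toZHat hφ σ = F := Subtype.ext (funext fun n => by
    refine dlog_unique hφ σ n ?_
    intro x hx
    exact hval x n hx)
  rw [h, hF]
  rfl

lemma continuous_eHom (hφ : ∀ x : K, φ x = x ^ Fintype.card k) :
    Continuous (eHom hφ) := by
  have hcoord : ∀ n : ℕ+, Continuous (fun σ : K ≃ₐ[k] K => dlog hφ σ n) := by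
    intro n
    rw [continuous_discrete_rng]
    intro a
    haveI := finite_frobField (φ := φ) hφ n.pos.ne'
    haveI : FiniteDimensional k (frobField φ (n : ℕ)) := Module.Finite.of_finite
    have hset : (fun σ : K ≃ₐ[k] K => dlog hφ σ n) ⁻¹' {a} =
        (φ ^ a.val) • ((frobField φ (n : ℕ)).fixingSubgroup : Set (K ≃ₐ[k] K)) := by
      ext σ
      simp only [Set.mem_preimage, Set.mem_singleton_iff]
      rw [Set.mem_smul_set]
      constructor
      · intro hd
        refine ⟨(φ ^ a.val)⁻¹ * σ, ?_, ?_⟩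
        · rw [SetLike.mem_coe, IntermediateField.mem_fixingSubgroup_iff]
          intro x hx
          have hs := dlog_spec hφ σ n x hx
          rw [hd] at hs
          show ((φ ^ a.val)⁻¹ * σ) x = x
          rw [AlgEquiv.mul_apply, hs, ← AlgEquiv.mul_apply, inv_mul_cancel]
          rfl
        · show (φ ^ a.val) * ((φ ^ a.val)⁻¹ * σ) = σ
          group
      · rintro ⟨τ, hτ, hτσ⟩
        rw [SetLike.mem_coe, IntermediateField.mem_fixingSubgroup_iff] at hτ
        refine dlog_unique hφ σ n ?_
        intro x hx
        have : (φ ^ a.val) • τ = σ := hτσ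
        rw [← this]
        show ((φ ^ a.val) * τ) x = (φ ^ a.val) x
        rw [AlgEquiv.mul_apply, hτ x hx]
    rw [hset]
    exact (IntermediateField.fixingSubgroup_isOpen _).smul _
  have hc : Continuous (fun σ : K ≃ₐ[k] K =>
      ((toZHat hφ σ : ZHat) : Π n : ℕ+, ZMod (n : ℕ))) := continuous_pi hcoord
  exact Continuous.subtype_mk hc _

end Aux

/-- The absolute Galois group of a finite field `k` is topologically generated by the
Frobenius `x ↦ x^q`, `q = |k|`, and is isomorphic as a topological (profinite) group
to `Ẑ = lim← ℤ/nℤ`. -/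
theorem galoisGroup_finiteField (k K : Type*) [Field k] [Fintype k] [Field K]
    [Algebra k K] [IsAlgClosure k K] (φ : K ≃ₐ[k] K)
    (hφ : ∀ x : K, φ x = x ^ Fintype.card k) :
    closure ((Subgroup.zpowers φ : Subgroup (K ≃ₐ[k] K)) : Set (K ≃ₐ[k] K)) = Set.univ ∧
    ∃ e : (K ≃ₐ[k] K) ≃* Multiplicative ZHat, Continuous e ∧ Continuous e.symm := by
  constructor
  · apply Set.eq_univ_of_forall
    intro σ
    rw [mem_closure_iff_nhds]
    intro t ht
    rw [← map_mul_left_nhds_one σ, Filter.mem_map, krullTopology_mem_nhds_one_iff] at ht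
    obtain ⟨E, hfd, hE⟩ := ht
    haveI := hfd
    obtain ⟨n, hEn⟩ := le_frobField hφ E
    refine ⟨φ ^ (dlog hφ σ n).val, ?_, ?_⟩
    · have hmem : σ⁻¹ * φ ^ (dlog hφ σ n).val ∈ E.fixingSubgroup := by
        rw [IntermediateField.mem_fixingSubgroup_iff]
        intro x hx
        show (σ⁻¹ * φ ^ (dlog hφ σ n).val) x = x
        rw [AlgEquiv.mul_apply, ← dlog_spec hφ σ n x (hEn hx), ← AlgEquiv.mul_apply,
          inv_mul_cancel]
        rfl
      have h2 := hE hmem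
      simpa [mul_inv_cancel_left] using h2
    · exact SetLike.mem_coe.mpr
        (Subgroup.mem_zpowers_iff.mpr ⟨((dlog hφ σ n).val : ℤ), zpow_natCast φ _⟩)
  · have hbij : Function.Bijective (eHom hφ) := ⟨eHom_injective hφ, eHom_surjective hφ⟩
    refine ⟨MulEquiv.ofBijective _ hbij, continuous_eHom hφ, ?_⟩
    set e := MulEquiv.ofBijective _ hbij with he
    have key : ∀ s ∈ nhds (1 : K ≃ₐ[k] K),
        (⇑e.symm) ⁻¹' s ∈ nhds (1 : Multiplicative ZHat) := by
      intro s hs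
      rw [krullTopology_mem_nhds_one_iff] at hs
      obtain ⟨E, hfd, hEs⟩ := hs
      haveI := hfd
      obtain ⟨n, hEn⟩ := le_frobField hφ E
      haveI : NeZero (n : ℕ) := ⟨n.pos.ne'⟩
      have hc : Continuous (fun g : Multiplicative ZHat => (Multiplicative.toAdd g).1 n) :=
        (continuous_apply n).comp continuous_subtype_val
      have hVopen : IsOpen {g : Multiplicative ZHat | (Multiplicative.toAdd g).1 n = 0} :=
        (isOpen_discrete ({0} : Set (ZMod (n : ℕ)))).preimage hc
      refine Filter.mem_of_superset (hVopen.mem_nhds ?_) ?_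
      · show (Multiplicative.toAdd (1 : Multiplicative ZHat)).1 n = 0
        rfl
      · intro g hg
        show e.symm g ∈ s
        apply hEs
        have happ : eHom hφ (e.symm g) = g := e.apply_symm_apply g
        have hd : dlog hφ (e.symm g) n = 0 := by
          have h2 : toZHat hφ (e.symm g) = Multiplicative.toAdd g :=
            congrArg Multiplicative.toAdd happ
          exact (congrFun (congrArg Subtype.val h2) n).trans hg
        rw [SetLike.mem_coe, IntermediateField.mem_fixingSubgroup_iff]
        intro x hx
        have hs' := dlog_spec hφ (e.symm g) n x (hEn hx)
        rw [hd] at hs'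
        simpa [ZMod.val_zero] using hs'
    have h1 : (⇑e.symm) 1 = 1 := map_one e.symm
    have ht : Filter.Tendsto (⇑e.symm) (nhds 1) (nhds 1) := Filter.tendsto_def.mpr key
    have hct : ContinuousAt (⇑e.symm) 1 := by
      show Filter.Tendsto _ (nhds 1) (nhds (e.symm 1))
      rw [show e.symm (1 : Multiplicative ZHat) = 1 from h1]
      exact ht
    exact continuous_of_continuousAt_one (e.symm : Multiplicative ZHat →* (K ≃ₐ[k] K)) hct
end

section
/- Let K ⊆ L be a Galois field extension and H a closed subgroup of Gal(L/K) (with the Krull topology). Then Gal(L/L^H) = H, where L^H is the fixed field of H. Consequently, the map H ↦ L^H is an inclusion-reversing bijection between closed subgroups of Gal(L/K) and intermediate fields K ⊆ M ⊆ L. -/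
open IntermediateField

section Aux
variable {K L : Type*} [Field K] [Field L] [Algebra K L]

/-- For a Galois (in fact any algebraic) extension, the fixing subgroup of any intermediate
field is closed in the Krull topology. -/
lemma aux_fixingSubgroup_isClosed [IsGalois K L] (E : IntermediateField K L) :
    IsClosed (E.fixingSubgroup : Set (L ≃ₐ[K] L)) := by
  constructor
  rw [isOpen_iff_mem_nhds]
  intro σ hσ
  simp only [Set.mem_compl_iff, SetLike.mem_coe, IntermediateField.mem_fixingSubgroup_iff,
    not_forall] at hσ
  obtain ⟨x, hxE, hx⟩ := hσ
  have hint : IsIntegral K x := (Algebra.IsSeparable.isSeparable K x).isIntegral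
  haveI := IntermediateField.adjoin.finiteDimensional hint
  have hopen := ((IntermediateField.adjoin K {x}).fixingSubgroup_isOpen).leftCoset σ
  refine Filter.mem_of_superset (hopen.mem_nhds ⟨1, Subgroup.one_mem _, mul_one σ⟩) ?_
  rintro τ ⟨ρ, hρ, rfl⟩
  simp only [Set.mem_compl_iff, SetLike.mem_coe, IntermediateField.mem_fixingSubgroup_iff,
    not_forall]
  refine ⟨x, hxE, ?_⟩
  have hρx : ρ x = x := hρ ⟨x, IntermediateField.mem_adjoin_simple_self K x⟩
  show σ (ρ x) ≠ x
  rw [hρx]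
  exact hx

lemma aux_fixingSubgroup_fixedField [IsGalois K L] (H : Subgroup (L ≃ₐ[K] L))
    (hH : IsClosed (H : Set (L ≃ₐ[K] L))) : (fixedField H).fixingSubgroup = H := by
  refine le_antisymm ?_ ((IntermediateField.le_iff_le H (fixedField H)).mp le_rfl)
  intro σ hσ
  have hcl : σ ∈ closure (H : Set (L ≃ₐ[K] L)) := by
    rw [mem_closure_iff_nhds]
    intro U hU
    -- translate the neighborhood to a neighborhood of 1
    have h1 : (fun x => σ⁻¹ * x) '' U ∈ nhds (1 : L ≃ₐ[K] L) := by
      have := (Homeomorph.mulLeft σ⁻¹).isOpenMap.image_mem_nhds hU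
      simpa using this
    obtain ⟨E, hfin, hsub⟩ := (krullTopology_mem_nhds_one_iff K L _).mp h1
    haveI : FiniteDimensional K E := hfin
    set F := normalClosure K E L with hF
    haveI : FiniteDimensional K F := normalClosure.is_finiteDimensional K E L
    haveI : IsGalois K F := IsGalois.normalClosure K E L
    let π : (L ≃ₐ[K] L) →* (F ≃ₐ[K] F) := AlgEquiv.restrictNormalHom F
    have hres : ∀ (τ : L ≃ₐ[K] L) (x : F), ((π τ x : F) : L) = τ x := fun τ x =>
      AlgEquiv.restrictNormal_commutes τ F x
    have hπσ : π σ ∈ Subgroup.map π H := by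
      rw [← IntermediateField.fixingSubgroup_fixedField (Subgroup.map π H)]
      rintro ⟨y, hy⟩
      have hyL : (y : L) ∈ fixedField H := by
        rintro ⟨τ, hτ⟩
        have h := hy ⟨π τ, Subgroup.mem_map_of_mem π hτ⟩
        show τ (y : L) = (y : L)
        rw [← hres τ y]
        exact congrArg _ h
      have h := hσ ⟨(y : L), hyL⟩
      show π σ y = y
      apply Subtype.ext
      rw [hres σ y]
      exact h
    obtain ⟨τ, hτH, hτ⟩ := hπσ
    have hτU : τ ∈ U := by
      have hmem : σ⁻¹ * τ ∈ E.fixingSubgroup := by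
        rintro ⟨x, hx⟩
        have hxF : x ∈ F := IntermediateField.le_normalClosure E hx
        have : τ x = σ x := by
          rw [← hres τ ⟨x, hxF⟩, ← hres σ ⟨x, hxF⟩, hτ]
        show σ⁻¹ (τ x) = x
        rw [this]
        exact σ.symm_apply_apply x
      obtain ⟨u, huU, hu⟩ := hsub hmem
      have : u = τ := by
        have := mul_left_cancel ((hu.trans rfl) : σ⁻¹ * u = σ⁻¹ * τ)
        exact this
      exact this ▸ huU
    exact ⟨τ, hτU, hτH⟩
  rwa [hH.closure_eq] at hcl

lemma aux_fixedField_fixingSubgroup [IsGalois K L] (M : IntermediateField K L) :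
    fixedField M.fixingSubgroup = M := by
  classical
  refine le_antisymm ?_ ((IntermediateField.le_iff_le M.fixingSubgroup M).mpr le_rfl)
  intro x hx
  by_contra hxM
  haveI : IsGalois M L := IsGalois.tower_top_intermediateField M
  have hsep : (minpoly M x).Separable := Algebra.IsSeparable.isSeparable M x
  have hint : IsIntegral M x := Algebra.IsIntegral.isIntegral x
  have hsplit : ((minpoly M x).map (algebraMap M L)).Splits := Normal.splits inferInstance x
  have hdeg : 2 ≤ (minpoly M x).natDegree := by
    rw [minpoly.two_le_natDegree_iff hint]
    intro h
    obtain ⟨y, hy⟩ := h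
    exact hxM (hy ▸ y.2)
  have hp0 : minpoly M x ≠ 0 := minpoly.ne_zero hint
  set p := (minpoly M x).map (algebraMap M L) with hp
  have hnodup : p.roots.Nodup := Polynomial.nodup_roots (hsep.map)
  have hcard : p.roots.card = (minpoly M x).natDegree :=
    hsplit.natDegree_eq_card_roots.symm.trans (Polynomial.natDegree_map _)
  have hxroot : x ∈ p.roots := by
    rw [hp, Polynomial.mem_roots_map_of_injective (algebraMap M L).injective hp0]
    exact minpoly.aeval M x
  have hcard' : 1 ≤ (p.roots.erase x).card := by
    rw [Multiset.card_erase_of_mem hxroot, Nat.pred_eq_sub_one, hcard]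
    omega
  obtain ⟨y, hy⟩ := Multiset.card_pos_iff_exists_mem.mp hcard'
  obtain ⟨hyx, hyroot⟩ := hnodup.mem_erase_iff.mp hy
  have hyroot' : Polynomial.aeval y (minpoly M x) = 0 := by
    rwa [hp, Polynomial.mem_roots_map_of_injective (algebraMap M L).injective hp0] at hyroot
  obtain ⟨σ, hσ⟩ := minpoly.exists_algEquiv_of_root (K := M) hint.isAlgebraic hyroot'
  let τ : L ≃ₐ[K] L := σ.restrictScalars K
  have hτ : τ ∈ M.fixingSubgroup := by
    rintro ⟨z, hz⟩
    exact σ.commutes ⟨z, hz⟩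
  have hfix := hx ⟨τ⁻¹, inv_mem hτ⟩
  have h1 : σ.symm x = x := hfix
  have h2 : σ.symm x = y := by rw [← hσ, AlgEquiv.symm_apply_apply]
  exact hyx (h2.symm.trans h1)

end Aux

/-- Infinite Galois correspondence: for a Galois extension `L/K` and a closed subgroup `H` of
`Gal(L/K)` (Krull topology), `Gal(L/L^H) = H`; consequently `H ↦ L^H` is an
inclusion-reversing bijection between closed subgroups and intermediate fields. -/
theorem krull_galois_correspondence (K L : Type*) [Field K] [Field L] [Algebra K L]
    [IsGalois K L] :
    (∀ H : Subgroup (L ≃ₐ[K] L), IsClosed (H : Set (L ≃ₐ[K] L)) →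
      (fixedField H).fixingSubgroup = H) ∧
    ∃ e : {H : Subgroup (L ≃ₐ[K] L) // IsClosed (H : Set (L ≃ₐ[K] L))} ≃
        IntermediateField K L,
      (∀ H, e H = fixedField H.1) ∧
      ∀ H₁ H₂, H₁.1 ≤ H₂.1 → e H₂ ≤ e H₁ := by
  refine ⟨fun H hH => aux_fixingSubgroup_fixedField H hH, ?_⟩
  refine ⟨{ toFun := fun H => fixedField H.1,
            invFun := fun M => ⟨M.fixingSubgroup, aux_fixingSubgroup_isClosed M⟩,
            left_inv := fun H => Subtype.ext (aux_fixingSubgroup_fixedField H.1 H.2),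
            right_inv := fun M => aux_fixedField_fixingSubgroup M }, fun H => rfl, ?_⟩
  intro H₁ H₂ h x hx
  exact fun g => hx ⟨g.1, h g.2⟩
end

section
/- Let k be an algebraically closed field and A a commutative k-algebra that is an integral domain. Let K be a field extension of k. Then k is integrally closed in A implies K is integrally closed in K ⊗_k A; in particular, if k is algebraically closed in A, then K = K ⊗_k k is the algebraic closure of K in K ⊗_k A. -/
open Polynomial

set_option maxHeartbeats 1000000
set_option synthInstance.maxHeartbeats 400000

open scoped TensorProduct in
/-- Let `k` be an algebraically closed field, `A` a `k`-algebra which is a domain, and `K` a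
field extension of `k`. If `k` is integrally (= algebraically) closed in `A`, then `K` is
integrally closed in `K ⊗_k A`. -/
theorem baseChange_integrallyClosed (k A K : Type*) [Field k] [IsAlgClosed k]
    [CommRing A] [IsDomain A] [Algebra k A] [Field K] [Algebra k K]
    (h : ∀ a : A, IsIntegral k a → a ∈ (algebraMap k A).range) :
    ∀ x : K ⊗[k] A, IsIntegral K x → x ∈ (algebraMap K (K ⊗[k] A)).range := by
  intro x hx
  classical
  obtain ⟨p, hpm, hpx⟩ := hx
  -- a basis of A over k containing 1
  have h1 : LinearIndepOn k id ({(1 : A)} : Set A) :=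
    LinearIndepOn.singleton one_ne_zero
  set B := Module.Basis.extend h1 with hBdef
  set i₀ : h1.extend (Set.subset_univ _) := ⟨1, h1.subset_extend _ rfl⟩ with hi₀
  have hB1 : B i₀ = 1 := Module.Basis.extend_apply_self _ _
  set c := (B.baseChange K).repr x with hc
  -- the finitely generated subalgebra of K containing all relevant coefficients
  set S : Set K := ↑(c.support.image c) ∪ ↑p.coeffs with hS
  set R : Subalgebra k K := Algebra.adjoin k S with hR
  have hcmem : ∀ j, c j ∈ R := by
    intro j
    by_cases hj : j ∈ c.support
    · exact Algebra.subset_adjoin (Or.inl (Finset.mem_coe.mpr (Finset.mem_image_of_mem _ hj)))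
    · rw [Finsupp.notMem_support_iff.mp hj]; exact zero_mem _
  have hpmem : (↑p.coeffs : Set K) ⊆ (R.toSubring : Set K) := fun a ha =>
    Algebra.subset_adjoin (Or.inr ha)
  haveI hFT : Algebra.FiniteType k R := (Subalgebra.fg_iff_finiteType R).mp
    (Subalgebra.fg_def.mpr ⟨S, ((c.support.image c).finite_toSet.union p.coeffs.finite_toSet), rfl⟩)
  haveI : IsJacobsonRing R := isJacobsonRing_of_finiteType (A := k)
  -- the polynomial over R
  set q : Polynomial R := p.toSubring R.toSubring hpmem with hq
  have hqm : q.Monic := (Polynomial.monic_toSubring p R.toSubring hpmem).mpr hpm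
  have hqmap : q.map R.toSubring.subtype = p := p.map_toSubring R.toSubring hpmem
  -- the lift y of x to R ⊗ A
  set Φ : R ⊗[k] A →ₐ[k] K ⊗[k] A := Algebra.TensorProduct.map R.val (AlgHom.id k A) with hΦ
  have hΦinj : Function.Injective Φ := by
    have heq : Φ.toLinearMap = LinearMap.rTensor A R.val.toLinearMap :=
      TensorProduct.ext' fun r a => rfl
    have := Module.Flat.rTensor_preserves_injective_linearMap (M := A)
      R.val.toLinearMap Subtype.val_injective
    rw [← heq] at this
    exact this
  set cR : _ → R := fun j => (⟨c j, hcmem j⟩ : R) with hcR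
  set y : R ⊗[k] A := ∑ j ∈ c.support, cR j ⊗ₜ[k] B j with hy
  have hxy : Φ y = x := by
    rw [hy, map_sum]
    have h2 : ∀ j ∈ c.support, Φ (cR j ⊗ₜ[k] B j) = c j • (B.baseChange K) j := by
      intro j _
      rw [Module.Basis.baseChange_apply, TensorProduct.smul_tmul']
      simp [hΦ, smul_eq_mul, mul_one]
      rfl
    rw [Finset.sum_congr rfl h2]
    conv_rhs => rw [← (B.baseChange K).linearCombination_repr x]
    rw [Finsupp.linearCombination_apply, Finsupp.sum]
  -- the integral equation descends to R ⊗ A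
  have hq0 : Polynomial.eval₂ (algebraMap R (R ⊗[k] A)) y q = 0 := by
    apply hΦinj
    rw [map_zero]
    have h3 : (Φ : R ⊗[k] A →+* K ⊗[k] A).comp (algebraMap R (R ⊗[k] A))
        = (algebraMap K (K ⊗[k] A)).comp R.toSubring.subtype := by
      ext r
      simp [hΦ, Algebra.TensorProduct.algebraMap_apply]
    calc Φ (Polynomial.eval₂ (algebraMap R (R ⊗[k] A)) y q)
        = Polynomial.eval₂ ((Φ : R ⊗[k] A →+* K ⊗[k] A).comp (algebraMap R (R ⊗[k] A))) (Φ y) q :=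
          Polynomial.hom_eval₂ _ _ _ _
      _ = Polynomial.eval₂ ((algebraMap K (K ⊗[k] A)).comp R.toSubring.subtype) x q := by
          rw [h3, hxy]
      _ = Polynomial.eval₂ (algebraMap K (K ⊗[k] A)) x (q.map R.toSubring.subtype) :=
          (Polynomial.eval₂_map _ _ _).symm
      _ = 0 := by rw [hqmap]; exact hpx
  -- key step: any k-algebra character of R kills all coefficients except the one at 1
  have key : ∀ (ψ : R →ₐ[k] k) (j), j ≠ i₀ → ψ (cR j) = 0 := by
    intro ψ j hj
    by_cases hjs : j ∈ c.support
    swap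
    · have : cR j = 0 := Subtype.ext (Finsupp.notMem_support_iff.mp hjs)
      rw [this, map_zero]
    set Ψ : R ⊗[k] A →ₐ[k] A :=
      (Algebra.TensorProduct.lid k A).toAlgHom.comp
        (Algebra.TensorProduct.map ψ (AlgHom.id k A)) with hΨ
    have hΨtmul : ∀ (r : R) (a : A), Ψ (r ⊗ₜ[k] a) = ψ r • a := by
      intro r a; simp [hΨ]
    set z : A := ∑ j' ∈ c.support, ψ (cR j') • B j' with hz
    have hΨy : Ψ y = z := by
      rw [hy, map_sum]; exact Finset.sum_congr rfl fun j' _ => hΨtmul _ _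
    have hint : IsIntegral k z := by
      refine ⟨q.map ψ.toRingHom, hqm.map _, ?_⟩
      have h4 : ((algebraMap k A).comp ψ.toRingHom : R →+* A)
          = (Ψ : R ⊗[k] A →+* A).comp (algebraMap R (R ⊗[k] A)) := by
        ext r
        simp only [RingHom.coe_comp, Function.comp_apply, AlgHom.toRingHom_eq_coe,
          RingHom.coe_coe]
        have h5 : (algebraMap (↥R) (↥R ⊗[k] A)) r = r ⊗ₜ[k] (1 : A) :=
          Algebra.TensorProduct.algebraMap_apply r
        rw [h5, hΨtmul, Algebra.algebraMap_eq_smul_one]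
      calc Polynomial.eval₂ (algebraMap k A) z (q.map ψ.toRingHom)
          = Polynomial.eval₂ ((algebraMap k A).comp ψ.toRingHom) z q :=
            Polynomial.eval₂_map _ _ _
        _ = Polynomial.eval₂ ((Ψ : ↥R ⊗[k] A →+* A).comp (algebraMap (↥R) (↥R ⊗[k] A)))
              ((Ψ : ↥R ⊗[k] A →+* A) y) q := by rw [h4]; rw [show ((Ψ : ↥R ⊗[k] A →+* A) y) = z from hΨy]
        _ = (Ψ : ↥R ⊗[k] A →+* A) (Polynomial.eval₂ (algebraMap (↥R) (↥R ⊗[k] A)) y q) :=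
            (Polynomial.hom_eval₂ _ _ _ _).symm
        _ = 0 := by rw [hq0, map_zero]
    obtain ⟨μ, hμ⟩ := h z hint
    have hrepr : B.repr z j = ψ (cR j) := by
      rw [hz, map_sum]
      rw [Finset.sum_apply']
      rw [Finset.sum_eq_single j]
      · rw [map_smul, Module.Basis.repr_self, Finsupp.smul_single, Finsupp.single_eq_same, smul_eq_mul,
          mul_one]
      · intro j' _ hj'
        rw [map_smul, Module.Basis.repr_self, Finsupp.smul_single, Finsupp.single_eq_of_ne' hj']
      · intro hcon; exact absurd hjs hcon
    have hrepr' : B.repr z j = 0 := by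
      have h5 : z = μ • B i₀ := by rw [hB1, ← Algebra.algebraMap_eq_smul_one, hμ]
      rw [h5, map_smul, Module.Basis.repr_self]
      simp [Finsupp.single_eq_of_ne' (Ne.symm hj)]
    rw [← hrepr, hrepr']
  -- hence those coefficients are in every maximal ideal, hence zero
  have hbot : ∀ j, j ≠ i₀ → cR j = 0 := by
    intro j hj
    have hmem : cR j ∈ (⊥ : Ideal R).jacobson := by
      rw [Ideal.jacobson, Ideal.mem_sInf]
      rintro m ⟨-, hm⟩
      haveI : m.IsMaximal := hm
      letI : Field (R ⧸ m) := Ideal.Quotient.field m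
      haveI : Algebra.FiniteType k (R ⧸ m) :=
        Algebra.FiniteType.of_surjective (Ideal.Quotient.mkₐ k m)
          (Ideal.Quotient.mkₐ_surjective k m)
      haveI := finite_of_finite_type_of_isJacobsonRing k (R ⧸ m)
      haveI : Algebra.IsIntegral k (R ⧸ m) := Algebra.IsIntegral.of_finite k _
      have hsurj : Function.Surjective (algebraMap k (R ⧸ m)) :=
        IsAlgClosed.algebraMap_bijective_of_isIntegral.2
      have hinjq : Function.Injective (algebraMap k (R ⧸ m)) :=
        (algebraMap k (R ⧸ m)).injective
      let e : k ≃ₐ[k] (R ⧸ m) := AlgEquiv.ofBijective (Algebra.ofId k _) ⟨hinjq, hsurj⟩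
      let ψ : R →ₐ[k] k := e.symm.toAlgHom.comp (Ideal.Quotient.mkₐ k m)
      have h6 := key ψ j hj
      have h7 : Ideal.Quotient.mk m (cR j) = 0 := by
        have := congrArg e h6
        simpa [ψ] using this
      exact Ideal.Quotient.eq_zero_iff_mem.mp h7
    have hjac : (⊥ : Ideal R).jacobson = ⊥ :=
      isJacobsonRing_iff_prime_eq.mp ‹IsJacobsonRing R› ⊥ Ideal.bot_prime
    rw [hjac] at hmem
    exact Ideal.mem_bot.mp hmem
  -- conclude
  have hsupp : c.support ⊆ {i₀} := by
    intro j hj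
    rcases eq_or_ne j i₀ with rfl | hne
    · exact Finset.mem_singleton_self _
    · exact absurd (congrArg Subtype.val (hbot j hne)) (Finsupp.mem_support_iff.mp hj)
  have hcs : c = Finsupp.single i₀ (c i₀) := Finsupp.support_subset_singleton.mp hsupp
  refine ⟨c i₀, ?_⟩
  have hxc : x = (B.baseChange K).repr.symm c := by rw [hc]; simp
  rw [hxc, hcs, Module.Basis.repr_symm_single, Module.Basis.baseChange_apply, hB1]
  simp [Algebra.TensorProduct.algebraMap_apply, TensorProduct.smul_tmul', smul_eq_mul]
end

section
/- Let k be an algebraically closed field and A a finitely generated k-algebra such that Spec A is connected (equivalently, A has no nontrivial idempotents). Let K be a field extension of k. Then Spec(K ⊗_k A) is connected (equivalently, K ⊗_k A has no nontrivial idempotents). -/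
open scoped TensorProduct

theorem exists_algHom (k A : Type*) [Field k] [IsAlgClosed k] [CommRing A] [Algebra k A]
    [Algebra.FiniteType k A] (m : Ideal A) (hm : m.IsMaximal) :
    ∃ φ : A →ₐ[k] k, ∀ x, φ x = 0 ↔ x ∈ m := by
  haveI := hm
  haveI : Algebra.FiniteType k (A ⧸ m) :=
    Algebra.FiniteType.of_surjective (Ideal.Quotient.mkₐ k m)
      Ideal.Quotient.mk_surjective
  haveI : Module.Finite k (A ⧸ m) :=
    @finite_of_finite_type_of_isJacobsonRing k (A ⧸ m) _ (Ideal.Quotient.field m) _ _ _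
  haveI : Algebra.IsIntegral k (A ⧸ m) := Algebra.IsIntegral.of_finite k (A ⧸ m)
  have hsurj : Function.Surjective (algebraMap k (A ⧸ m)) :=
    IsAlgClosed.algebraMap_bijective_of_isIntegral.2
  have hinj : Function.Injective (algebraMap k (A ⧸ m)) :=
    (algebraMap k (A ⧸ m)).injective
  let eqv : k ≃+* (A ⧸ m) := RingEquiv.ofBijective (algebraMap k (A ⧸ m)) ⟨hinj, hsurj⟩
  refine ⟨{ toRingHom := eqv.symm.toRingHom.comp (Ideal.Quotient.mk m),
            commutes' := fun r => ?_ }, fun x => ?_⟩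
  · show eqv.symm (Ideal.Quotient.mk m (algebraMap k A r)) = r
    have : Ideal.Quotient.mk m (algebraMap k A r) = eqv r := by
      simp [eqv, RingEquiv.ofBijective, ← IsScalarTower.algebraMap_apply]
      rfl
    rw [this, RingEquiv.symm_apply_apply]
  · show eqv.symm (Ideal.Quotient.mk m x) = 0 ↔ _
    rw [map_eq_zero_iff _ eqv.symm.injective, Ideal.Quotient.eq_zero_iff_mem]

/-- Elements in all maximal ideals of a f.g. algebra over a field are nilpotent. -/
theorem nilpotent_of_mem_all_max (k A : Type*) [Field k] [CommRing A] [Algebra k A]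
    [Algebra.FiniteType k A] (x : A) (hx : ∀ m : Ideal A, m.IsMaximal → x ∈ m) :
    IsNilpotent x := by
  haveI : IsJacobsonRing A := isJacobsonRing_of_finiteType (A := k)
  rw [← mem_nilradical]
  show x ∈ (0 : Ideal A).radical
  rw [Ideal.radical_eq_jacobson, Ideal.jacobson, Ideal.mem_sInf]
  rintro J ⟨-, hJ⟩
  exact hx J hJ

open scoped TensorProduct in
/-- Let `k` be an algebraically closed field, `A` a finitely generated `k`-algebra with no
nontrivial idempotents (i.e. `Spec A` connected), and `K` a field extension of `k`. Then
`K ⊗_k A` has no nontrivial idempotents (i.e. `Spec (K ⊗_k A)` is connected). -/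
theorem baseChange_connected (k A K : Type*) [Field k] [IsAlgClosed k]
    [CommRing A] [Algebra k A] [Algebra.FiniteType k A] [Field K] [Algebra k K]
    (h : ∀ e : A, IsIdempotentElem e → e = 0 ∨ e = 1) :
    ∀ e : K ⊗[k] A, IsIdempotentElem e → e = 0 ∨ e = 1 := by
  intro e he
  classical
  have h1 : LinearIndepOn k id ({1} : Set K) :=
    (linearIndepOn_singleton_iff k).mpr one_ne_zero
  let b := Module.Basis.extend h1
  let i₀ : h1.extend (Set.subset_univ _) := ⟨1, h1.subset_extend _ rfl⟩
  have hb0 : b i₀ = 1 := by rw [Module.Basis.coe_extend]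
  let ψ : K ⊗[k] A ≃ₗ[k] (h1.extend (Set.subset_univ _) →₀ A) :=
    (TensorProduct.congr b.repr (LinearEquiv.refl k A)).trans
      (TensorProduct.finsuppScalarLeft k A _)
  have hψ : ∀ (i) (a : A), ψ (b i ⊗ₜ[k] a) = Finsupp.single i a := by
    intro i a
    simp only [ψ, LinearEquiv.trans_apply, TensorProduct.congr_tmul, Module.Basis.repr_self,
      LinearEquiv.refl_apply, TensorProduct.finsuppScalarLeft_apply_tmul]
    rw [Finsupp.sum_single_index (by simp)]
    simp
  let c := ψ e
  let s : Finset _ := insert i₀ c.support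
  have hi₀s : i₀ ∈ s := Finset.mem_insert_self _ _
  have he_repr : e = ∑ i ∈ s, b i ⊗ₜ[k] c i := by
    apply ψ.injective
    rw [map_sum]
    simp_rw [hψ]
    rw [Finset.sum_insert_of_eq_zero_if_notMem (fun hi => by
      simp [Finsupp.notMem_support_iff.mp hi])]
    exact (Finsupp.sum_single c).symm
  -- key nilpotency criterion
  have key : ∀ x : A, (∀ φ : A →ₐ[k] k, φ x = 0) → IsNilpotent x := by
    intro x hx
    apply nilpotent_of_mem_all_max k
    intro m hm
    obtain ⟨φ, hφ⟩ := exists_algHom k A m hm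
    exact (hφ x).mp (hx φ)
  -- coefficients under any k-point
  have coeff : ∀ φ : A →ₐ[k] k,
      (∀ i ∈ s, i ≠ i₀ → φ (c i) = 0) ∧ φ (c i₀ * c i₀ - c i₀) = 0 := by
    intro φ
    let Φ : K ⊗[k] A →ₐ[k] K :=
      Algebra.TensorProduct.productMap (AlgHom.id k K) ((Algebra.ofId k K).comp φ)
    have hΦe : Φ e = ∑ i ∈ s, φ (c i) • b i := by
      rw [he_repr, map_sum]
      refine Finset.sum_congr rfl fun i _ => ?_
      rw [Algebra.TensorProduct.productMap_apply_tmul]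
      simp [Algebra.ofId_apply, Algebra.smul_def, mul_comm]
    have hidem : Φ e = 0 ∨ Φ e = 1 :=
      IsIdempotentElem.iff_eq_zero_or_one.mp (by
        show Φ e * Φ e = Φ e
        rw [← map_mul, he])
    have li := linearIndependent_iff'.mp b.linearIndependent
    rcases hidem with h0 | h0
    · have hz : ∀ i ∈ s, φ (c i) = 0 := by
        intro i hi
        exact li s (fun i => φ (c i)) (by rw [← hΦe, h0]) i hi
      refine ⟨fun i hi _ => hz i hi, ?_⟩
      rw [map_sub, map_mul, hz i₀ hi₀s]
      ring
    · have hz : ∀ i ∈ s, φ (c i) - (if i = i₀ then 1 else 0) = 0 := by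
        intro i hi
        refine li s (fun i => φ (c i) - (if i = i₀ then 1 else 0)) ?_ i hi
        simp only [sub_smul, ite_smul, one_smul, zero_smul, Finset.sum_sub_distrib]
        rw [← hΦe, h0, Finset.sum_ite_eq' s i₀ (fun i => b i), if_pos hi₀s, hb0, sub_self]
      have h00 : ∀ i ∈ s, i ≠ i₀ → φ (c i) = 0 := by
        intro i hi hne
        have := hz i hi
        rwa [if_neg hne, sub_zero] at this
      have h01 : φ (c i₀) = 1 := by
        have := hz i₀ hi₀s
        rwa [if_pos rfl, sub_eq_zero] at this
      refine ⟨h00, ?_⟩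
      rw [map_sub, map_mul, h01]
      ring
  have hnil : ∀ i ∈ s, i ≠ i₀ → IsNilpotent (c i) := fun i hi hne =>
    key _ fun φ => (coeff φ).1 i hi hne
  have hnil0 : IsNilpotent (c i₀ * c i₀ - c i₀) := key _ fun φ => (coeff φ).2
  -- lift to an honest idempotent of A
  obtain ⟨e', he', hee'⟩ := exists_isIdempotentElem_eq_of_ker_isNilpotent
    (Ideal.Quotient.mk (nilradical A))
    (fun x hx => mem_nilradical.mp (Ideal.Quotient.eq_zero_iff_mem.mp hx))
    (Ideal.Quotient.mk _ (c i₀)) ⟨c i₀, rfl⟩ (by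
      show _ * _ = _
      rw [← map_mul, ← sub_eq_zero, ← map_sub]
      exact Ideal.Quotient.eq_zero_iff_mem.mpr (mem_nilradical.mpr hnil0))
  have hd : IsNilpotent (c i₀ - e') := by
    apply mem_nilradical.mp
    apply Ideal.Quotient.eq_zero_iff_mem.mp
    rw [map_sub, hee', sub_self]
  have tnil : ∀ (x : K) (a : A), IsNilpotent a → IsNilpotent (x ⊗ₜ[k] a : K ⊗[k] A) := by
    rintro x a ⟨n, hn⟩
    exact ⟨n, by rw [Algebra.TensorProduct.tmul_pow, hn, TensorProduct.tmul_zero]⟩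
  have hEnil : IsNilpotent (e - (1 : K) ⊗ₜ[k] e') := by
    have hrw : e - (1 : K) ⊗ₜ[k] e'
        = (1 : K) ⊗ₜ[k] (c i₀ - e') + ∑ i ∈ s.erase i₀, b i ⊗ₜ[k] c i := by
      rw [he_repr, ← Finset.add_sum_erase _ _ hi₀s, hb0, TensorProduct.tmul_sub]
      ring
    rw [hrw]
    refine Commute.isNilpotent_add (Commute.all _ _) (tnil _ _ hd) ?_
    exact isNilpotent_sum fun i hi =>
      tnil _ _ (hnil i (Finset.mem_of_mem_erase hi) (Finset.ne_of_mem_erase hi))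
  rcases h e' he' with rfl | rfl
  · left
    have hn : IsNilpotent e := by simpa using hEnil
    exact he.eq_zero_of_isNilpotent hn
  · right
    have hn : IsNilpotent (1 - e) := by
      have : (1 : K ⊗[k] A) = (1 : K) ⊗ₜ[k] (1 : A) := rfl
      rw [this]
      simpa using hEnil.neg
    have := he.one_sub.eq_zero_of_isNilpotent hn
    rw [sub_eq_zero] at this
    exact this.symm
end

section
/- Let k be a field of characteristic p > 0 and consider the polynomial ring k[s, t]. For the element a = s·t ∈ k(s, t), the Artin–Schreier extension of k(s,t) given by x^p − x = st is a degree-p extension that is not obtained by base change from an extension of k(s); more precisely, x^p − x − st is irreducible over k(s, t), and there is no y ∈ k(s,t) with y^p − y − st ∈ k(s). -/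
open Polynomial

/-! Auxiliary lemmas for the Lang–Serre example. -/

theorem artinSchreier_irreducible' {K : Type*} [Field K] {p : ℕ} [hF : Fact p.Prime]
    [CharP K p] {a : K} (ha : ∀ c : K, c ^ p - c ≠ a) :
    Irreducible (X ^ p - X - C a : K[X]) := by
  have hp2 : 2 ≤ p := hF.out.two_le
  set f : K[X] := X ^ p - X - C a with hf
  have hfeq : f = X ^ p - (X + C a) := by ring
  have hdlt : (X + C a : K[X]).degree < ((X : K[X]) ^ p).degree := by
    rw [degree_X_pow, degree_X_add_C]
    exact_mod_cast (by omega : 1 < p)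
  have hmonic : f.Monic := by
    rw [hfeq]; exact monic_X_pow_sub (by simpa using hdlt)
  have hdeg : f.degree = p := by
    rw [hfeq, degree_sub_eq_left_of_degree_lt hdlt, degree_X_pow]
  have hndeg : f.natDegree = p := natDegree_eq_of_degree_eq_some hdeg
  constructor
  · intro hu
    have := isUnit_iff_degree_eq_zero.mp hu
    rw [hdeg] at this
    exact (by omega : p ≠ 0) (by exact_mod_cast this)
  · intro g h hgh
    by_contra hcon
    push_neg at hcon
    obtain ⟨hg, hh⟩ := hcon
    have hf0 : f ≠ 0 := hmonic.ne_zero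
    have hg0 : g ≠ 0 := fun h0 => hf0 (by rw [hgh, h0, zero_mul])
    have hh0 : h ≠ 0 := fun h0 => hf0 (by rw [hgh, h0, mul_zero])
    have hunit : ∀ q : K[X], q ≠ 0 → q.natDegree = 0 → IsUnit q := by
      intro q hq0 hq
      rw [eq_C_of_natDegree_eq_zero hq]
      refine isUnit_C.mpr (IsUnit.mk0 _ fun hc => hq0 ?_)
      rw [eq_C_of_natDegree_eq_zero hq, hc, map_zero]
    have hgd : 0 < g.natDegree :=
      Nat.pos_of_ne_zero fun h1 => hg (hunit g hg0 h1)
    have hhd : 0 < h.natDegree :=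
      Nat.pos_of_ne_zero fun h1 => hh (hunit h hh0 h1)
    have hsumdeg : g.natDegree + h.natDegree = p := by
      rw [← hndeg, hgh, natDegree_mul hg0 hh0]
    set d := g.natDegree with hd
    have hdp : d < p := by omega
    set g1 : K[X] := g * C g.leadingCoeff⁻¹ with hg1
    have hg1monic : g1.Monic := monic_mul_leadingCoeff_inv hg0
    have hg1dvd : g1 ∣ f := by
      refine ⟨C g.leadingCoeff * h, ?_⟩
      rw [hgh, hg1, mul_assoc, ← mul_assoc (C g.leadingCoeff⁻¹), ← map_mul,
        inv_mul_cancel₀ (leadingCoeff_ne_zero.mpr hg0), map_one, one_mul]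
    have hg1d : g1.natDegree = d := by
      rw [hg1, natDegree_mul hg0 (by simp [leadingCoeff_ne_zero.mpr hg0]), natDegree_C, add_zero]
    set E := AlgebraicClosure K
    set φ := algebraMap K E with hφ
    have hφinj : Function.Injective φ := (algebraMap K E).injective
    haveI : CharP E p := charP_of_injective_algebraMap hφinj p
    haveI : ExpChar E p := ExpChar.prime hF.out
    set gm : E[X] := g1.map φ with hgm
    have hgmmonic : gm.Monic := hg1monic.map φ
    have hgmsplit : Splits gm :=
      IsAlgClosed.splits gm
    have hcard : Multiset.card gm.roots = d := by
      rw [splits_iff_card_roots.mp hgmsplit, hgm, natDegree_map, hg1d]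
    have hroot : ∀ r ∈ gm.roots, r ^ p = r + φ a := by
      intro r hr
      have hrr : gm.eval r = 0 := (mem_roots hgmmonic.ne_zero).mp hr
      have hdvd : gm ∣ f.map φ := Polynomial.map_dvd φ hg1dvd
      have hfr : (f.map φ).eval r = 0 := eval_eq_zero_of_dvd_of_eval_eq_zero hdvd hrr
      have hmap : f.map φ = X ^ p - X - C (φ a) := by
        rw [hf]; simp [Polynomial.map_sub, Polynomial.map_pow]
      rw [hmap] at hfr
      simp only [eval_sub, eval_pow, eval_X, eval_C] at hfr
      linear_combination hfr
    set σ : E := gm.roots.sum with hσ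
    have hσK : σ = φ (-g1.nextCoeff) := by
      have h1 : gm.nextCoeff = -σ := hgmsplit.nextCoeff_eq_neg_sum_roots_of_monic hgmmonic
      have h2 : gm.nextCoeff = φ g1.nextCoeff := nextCoeff_map hφinj g1
      rw [h2] at h1
      rw [map_neg, h1, neg_neg]
    have hfrob : σ ^ p = σ + d • φ a := by
      have h1 : σ ^ p = (gm.roots.map fun r => r ^ p).sum := by
        have h0 := map_multiset_sum (frobenius E p) gm.roots
        exact h0
      rw [h1, Multiset.map_congr rfl hroot, Multiset.sum_map_add]
      congr 1
      · rw [Multiset.map_id']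
      · rw [Multiset.map_const', Multiset.sum_replicate, hcard]
    set b : K := -g1.nextCoeff with hb
    have hbK : b ^ p = b + d • a := by
      apply hφinj
      rw [map_pow, map_add, map_nsmul, ← hσK, hfrob]
    have hdK : (d : K) ≠ 0 := by
      rw [Ne, CharP.cast_eq_zero_iff K p]
      exact Nat.not_dvd_of_pos_of_lt hgd hdp
    have hdpow : (d : K) ^ p = (d : K) := by
      have : ((d ^ p : ℕ) : K) = ((d : ℕ) : K) := by
        rw [CharP.natCast_eq_natCast K p]
        exact (ZMod.natCast_eq_natCast_iff _ _ _).mp (by push_cast; exact ZMod.pow_card _)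
      push_cast at this
      exact this
    refine ha (b / d) ?_
    rw [div_pow, hdpow, div_sub_div_same, hbK, nsmul_eq_mul, add_sub_cancel_left,
      mul_comm, mul_div_assoc, div_self hdK, mul_one]

theorem RatFunc.intDegree_pow' {k : Type*} [Field k] {x : RatFunc k} (hx : x ≠ 0) (n : ℕ) :
    (x ^ n).intDegree = n * x.intDegree := by
  induction n with
  | zero => simp
  | succ n ih =>
    rw [pow_succ, RatFunc.intDegree_mul (pow_ne_zero _ hx) hx, ih]
    push_cast; ring

theorem no_artinSchreier_rel {k : Type*} [Field k] {p : ℕ} (hp : 2 ≤ p)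
    (Y : RatFunc (RatFunc k)) (w : RatFunc k) :
    Y ^ p - Y ≠ RatFunc.C (RatFunc.X : RatFunc k) * RatFunc.X + RatFunc.C w := by
  set q : (RatFunc k)[X] := Polynomial.C (RatFunc.X : RatFunc k) * Polynomial.X
    + Polynomial.C w with hq
  have hq1 : q.natDegree = 1 := natDegree_linear (RatFunc.X_ne_zero (K := k))
  have hq0 : q ≠ 0 := fun h => by simp [h] at hq1
  have hZeq : RatFunc.C (RatFunc.X : RatFunc k) * RatFunc.X + RatFunc.C w
      = algebraMap (RatFunc k)[X] (RatFunc (RatFunc k)) q := by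
    rw [hq, map_add, map_mul, RatFunc.algebraMap_C, RatFunc.algebraMap_X, RatFunc.algebraMap_C]
  have hZ0 : RatFunc.C (RatFunc.X : RatFunc k) * RatFunc.X + RatFunc.C w ≠ 0 := by
    rw [hZeq]; exact RatFunc.algebraMap_ne_zero hq0
  have hdZ : RatFunc.intDegree (RatFunc.C (RatFunc.X : RatFunc k) * RatFunc.X + RatFunc.C w)
      = 1 := by
    rw [hZeq, RatFunc.intDegree_polynomial, hq1]; rfl
  intro heq
  have hY0 : Y ≠ 0 := by
    rintro rfl
    rw [zero_pow (by omega), sub_zero] at heq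
    exact hZ0 heq.symm
  have hYp0 : Y ^ p ≠ 0 := pow_ne_zero _ hY0
  have hsub0 : Y ^ p - Y ≠ 0 := heq ▸ hZ0
  have hdsub : (Y ^ p - Y).intDegree = 1 := by rw [heq, hdZ]
  have hpow : (Y ^ p).intDegree = p * Y.intDegree := RatFunc.intDegree_pow' hY0 p
  set d := Y.intDegree with hd
  rcases le_or_gt d 0 with h0 | h0
  · have hle := RatFunc.intDegree_add_le (x := Y ^ p) (y := -Y)
      (neg_ne_zero.mpr hY0) (by rwa [← sub_eq_add_neg])
    rw [← sub_eq_add_neg, hdsub, hpow, RatFunc.intDegree_neg] at hle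
    have hpd : (p : ℤ) * d ≤ 0 := mul_nonpos_of_nonneg_of_nonpos (by positivity) h0
    omega
  · have hle := RatFunc.intDegree_add_le (x := Y ^ p - Y) (y := Y) hY0
      (by rwa [sub_add_cancel])
    rw [sub_add_cancel, hdsub, ← hd, max_eq_right (by omega : (1:ℤ) ≤ d), hpow] at hle
    nlinarith [h0, (by exact_mod_cast hp : (2:ℤ) ≤ (p:ℤ))]

noncomputable def polyEquiv (k : Type*) [Field k] :
    MvPolynomial (Fin 2) k ≃+* Polynomial (Polynomial k) :=
  ((MvPolynomial.renameEquiv k (Equiv.swap 0 1)).toRingEquiv.trans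
    (MvPolynomial.finSuccEquiv k 1).toRingEquiv).trans
    (Polynomial.mapEquiv ((MvPolynomial.finSuccEquiv k 0).toRingEquiv.trans
      (Polynomial.mapEquiv (MvPolynomial.isEmptyRingEquiv k (Fin 0)))))

theorem polyEquiv_X0 {k : Type*} [Field k] :
    polyEquiv k (MvPolynomial.X 0) = Polynomial.C Polynomial.X := by
  have h2 : MvPolynomial.finSuccEquiv k 1 (MvPolynomial.X 1) = Polynomial.C (MvPolynomial.X 0) := by
    rw [← Fin.succ_zero_eq_one, MvPolynomial.finSuccEquiv_X_succ]
  simp [polyEquiv, Polynomial.mapEquiv_apply, h2, MvPolynomial.finSuccEquiv_X_zero]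

theorem polyEquiv_X1 {k : Type*} [Field k] :
    polyEquiv k (MvPolynomial.X 1) = Polynomial.X := by
  simp [polyEquiv, Polynomial.mapEquiv_apply, Equiv.swap_apply_right,
    MvPolynomial.finSuccEquiv_X_zero]

theorem polyEquiv_C {k : Type*} [Field k] (c : k) :
    polyEquiv k (MvPolynomial.C c) = Polynomial.C (Polynomial.C c) := by
  simp [polyEquiv, Polynomial.mapEquiv_apply, MvPolynomial.finSuccEquiv_apply,
    MvPolynomial.eval₂Hom_C, MvPolynomial.isEmptyRingEquiv]
  exact MvPolynomial.coeff_zero_C c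

set_option synthInstance.maxHeartbeats 1000000 in
set_option maxHeartbeats 1600000 in
/-- The key auxiliary result: no `y ∈ k(s,t)` has `y^p - y - st ∈ k(s)`. -/
theorem langSerre_aux (k : Type*) [Field k] (p : ℕ) (hp2 : 2 ≤ p)
    (y : FractionRing (MvPolynomial (Fin 2) k)) :
    y ^ p - y - algebraMap (MvPolynomial (Fin 2) k) _ (MvPolynomial.X 0) *
        algebraMap (MvPolynomial (Fin 2) k) _ (MvPolynomial.X 1) ∉
      IntermediateField.adjoin k
        {algebraMap (MvPolynomial (Fin 2) k) (FractionRing (MvPolynomial (Fin 2) k))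
          (MvPolynomial.X 0)} := by
  intro hy
  set s : FractionRing (MvPolynomial (Fin 2) k) :=
    algebraMap (MvPolynomial (Fin 2) k) _ (MvPolynomial.X 0) with hs'
  set t : FractionRing (MvPolynomial (Fin 2) k) :=
    algebraMap (MvPolynomial (Fin 2) k) _ (MvPolynomial.X 1) with ht'
  set ψ : MvPolynomial (Fin 2) k →+* RatFunc (RatFunc k) :=
    ((algebraMap (Polynomial (RatFunc k)) (RatFunc (RatFunc k))).comp
      (Polynomial.mapRingHom (algebraMap (Polynomial k) (RatFunc k)))).comp
      (polyEquiv k).toRingHom with hψ'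
  have hψinj : Function.Injective ψ := by
    have h1 : Function.Injective (algebraMap (Polynomial (RatFunc k)) (RatFunc (RatFunc k))) :=
      IsFractionRing.injective _ _
    have h2 : Function.Injective (Polynomial.mapRingHom (algebraMap (Polynomial k) (RatFunc k))) :=
      Polynomial.map_injective _ (IsFractionRing.injective _ _)
    rw [hψ']
    simp only [RingHom.coe_comp, RingEquiv.toRingHom_eq_coe, RingHom.coe_coe]
    exact (h1.comp h2).comp (polyEquiv k).injective
  set Φ : FractionRing (MvPolynomial (Fin 2) k) →+* RatFunc (RatFunc k) :=
    IsFractionRing.lift hψinj with hΦ'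
  have hΦalg : ∀ x : MvPolynomial (Fin 2) k,
      Φ (algebraMap (MvPolynomial (Fin 2) k) (FractionRing (MvPolynomial (Fin 2) k)) x) = ψ x :=
    fun x => IsFractionRing.lift_algebraMap hψinj x
  have hcomp : ∀ x : MvPolynomial (Fin 2) k,
      ψ x = algebraMap (Polynomial (RatFunc k)) (RatFunc (RatFunc k))
        (Polynomial.map (algebraMap (Polynomial k) (RatFunc k)) (polyEquiv k x)) := by
    intro x
    rw [hψ']
    simp only [RingHom.coe_comp, RingEquiv.toRingHom_eq_coe, RingHom.coe_coe,
      Function.comp_apply, Polynomial.coe_mapRingHom]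
  have hψs : ψ (MvPolynomial.X 0) = RatFunc.C (RatFunc.X : RatFunc k) := by
    rw [hcomp, polyEquiv_X0, Polynomial.map_C, RatFunc.algebraMap_X, RatFunc.algebraMap_C]
  have hψt : ψ (MvPolynomial.X 1) = (RatFunc.X : RatFunc (RatFunc k)) := by
    rw [hcomp, polyEquiv_X1, Polynomial.map_X, RatFunc.algebraMap_X]
  have hψC : ∀ c : k, ψ (MvPolynomial.C c) = RatFunc.C (RatFunc.C c) := by
    intro c
    rw [hcomp, polyEquiv_C, Polynomial.map_C, RatFunc.algebraMap_C, RatFunc.algebraMap_C]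
  have hsΦ : Φ s = RatFunc.C (RatFunc.X : RatFunc k) := by rw [hs', hΦalg, hψs]
  have htΦ : Φ t = (RatFunc.X : RatFunc (RatFunc k)) := by rw [ht', hΦalg, hψt]
  have hkΦ : ∀ c : k, Φ (algebraMap k (FractionRing (MvPolynomial (Fin 2) k)) c)
      = RatFunc.C (RatFunc.C c) := by
    intro c
    rw [IsScalarTower.algebraMap_apply k (MvPolynomial (Fin 2) k)
      (FractionRing (MvPolynomial (Fin 2) k)), hΦalg, MvPolynomial.algebraMap_eq, hψC]
  set S : Subfield (RatFunc (RatFunc k)) :=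
    RingHom.fieldRange (RatFunc.C : RatFunc k →+* RatFunc (RatFunc k)) with hS'
  have hTmem : ∀ c : k,
      algebraMap k (FractionRing (MvPolynomial (Fin 2) k)) c ∈ S.comap Φ := by
    intro c
    rw [Subfield.mem_comap, hkΦ]
    exact ⟨RatFunc.C c, rfl⟩
  set T : IntermediateField k (FractionRing (MvPolynomial (Fin 2) k)) :=
    Subfield.toIntermediateField (S.comap Φ) hTmem with hT'
  have hsT : s ∈ T := by
    show Φ s ∈ S
    rw [hsΦ]
    exact ⟨RatFunc.X, rfl⟩
  have hle : IntermediateField.adjoin k {s} ≤ T :=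
    IntermediateField.adjoin_le_iff.mpr (Set.singleton_subset_iff.mpr hsT)
  have hmem : Φ (y ^ p - y - s * t) ∈ S := hle hy
  obtain ⟨w, hw⟩ := hmem
  rw [RingHom.map_sub, RingHom.map_sub, RingHom.map_pow, RingHom.map_mul, hsΦ, htΦ] at hw
  refine no_artinSchreier_rel hp2 (Φ y) w ?_
  linear_combination -hw

/-- Lang–Serre example: over `k(s,t)` with `char k = p > 0`, the Artin–Schreier polynomial
`x^p - x - st` is irreducible, and there is no `y ∈ k(s,t)` with `y^p - y - st ∈ k(s)`;
so the Artin–Schreier cover `x^p - x = st` is a degree-`p` extension not obtained by base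
change from `k(s)`. -/
theorem langSerre_example (k : Type*) [Field k] (p : ℕ) [CharP k p] (hp : 0 < p) :
    letI K := FractionRing (MvPolynomial (Fin 2) k)
    letI s : K := algebraMap (MvPolynomial (Fin 2) k) K (MvPolynomial.X 0)
    letI t : K := algebraMap (MvPolynomial (Fin 2) k) K (MvPolynomial.X 1)
    Irreducible (X ^ p - X - C (s * t) : K[X]) ∧
      ∀ y : K, y ^ p - y - s * t ∉ IntermediateField.adjoin k {s} := by
  haveI : NeZero p := ⟨hp.ne'⟩
  haveI hFp : Fact p.Prime := CharP.char_is_prime_of_pos k p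
  have hp2 : 2 ≤ p := hFp.out.two_le
  refine ⟨?_, fun y => langSerre_aux k p hp2 y⟩
  haveI : CharP (FractionRing (MvPolynomial (Fin 2) k)) p :=
    charP_of_injective_algebraMap
      (algebraMap k (FractionRing (MvPolynomial (Fin 2) k))).injective p
  refine artinSchreier_irreducible' fun c hc => ?_
  exact langSerre_aux k p hp2 c (by rw [hc, sub_self]; exact zero_mem _)
end
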